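/- arXiv:1602.03518 — 9 statements merged into one kernel-verified Lean document; each statement's English description precedes it below -/
import Mathlib

section
/- Let f = f_{β,E} be a generalized β-transformation. For every z ∈ ℂ with |z| > 1, the series Σ_{j≥1} s(j)d(j)z^{−j} and Σ_{j≥0} c_j z^{−j} converge absolutely and satisfy the identity 1 − Σ_{j=1}^∞ s(j)d(j) z^{−j} = (1 − β/z) · Σ_{j=0}^∞ c_j z^{−j}. -/
open Finset

/-- The index `k` such that `x ∈ I_k`, where `I_0 = [0, 1/β]`,
`I_k = (k/β, (k+1)/β]` for `1 ≤ k ≤ m-1` and `I_m = (m/β, 1]`. -/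
noncomputable def branchIdx (β x : ℝ) : ℕ := (⌈β * x⌉ - 1).toNat

/-- The generalized β-transformation `f_{β,E}`, where `E` records the signs of the branches. -/
noncomputable def gbeta (β : ℝ) (E : ℕ → ℤ) (x : ℝ) : ℝ :=
  if E (branchIdx β x) = 1 then β * x - branchIdx β x
  else -(β * x) + branchIdx β x + 1

/-- The sign `e(j)` of the branch containing `f^{j-1}(1)`. -/
noncomputable def esign (β : ℝ) (E : ℕ → ℤ) (j : ℕ) : ℤ :=
  E (branchIdx β ((gbeta β E)^[j - 1] 1))

/-- The cumulative sign `s(j)`, with `s(1) = 1` and `s(j+1) = e(j)·s(j)`. -/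
noncomputable def csign (β : ℝ) (E : ℕ → ℤ) (j : ℕ) : ℤ :=
  ∏ l ∈ Finset.Ico 1 j, esign β E l

/-- The digit `d(j)` of the (β,E)-expansion of 1. -/
noncomputable def digit (β : ℝ) (E : ℕ → ℤ) (j : ℕ) : ℕ :=
  if E (branchIdx β ((gbeta β E)^[j - 1] 1)) = 1
  then branchIdx β ((gbeta β E)^[j - 1] 1)
  else branchIdx β ((gbeta β E)^[j - 1] 1) + 1

/-- The signed orbit `c_j = s(j+1)·f^j(1)`, with `c_0 = 1`. -/
noncomputable def sorbit (β : ℝ) (E : ℕ → ℤ) (j : ℕ) : ℝ :=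
  (csign β E (j + 1) : ℝ) * (gbeta β E)^[j] 1

/-- The data `(m, β, E)` is valid for a generalized β-transformation:
`m ≥ 1`, `β ∈ (m, m+1]` and `E(0), …, E(m) ∈ {1, -1}`. -/
def IsGBetaValid (m : ℕ) (β : ℝ) (E : ℕ → ℤ) : Prop :=
  1 ≤ m ∧ (m : ℝ) < β ∧ β ≤ m + 1 ∧ ∀ k ≤ m, E k = 1 ∨ E k = -1

/-- `f_{β,E}` is post-critically finite: the orbit of `1` is finite. -/
def IsPCF (β : ℝ) (E : ℕ → ℤ) : Prop :=
  Set.Finite {x : ℝ | ∃ j : ℕ, (gbeta β E)^[j] 1 = x}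

/-- `β > 1` is a generalized Parry number if some `f_{β,E}` is post-critically finite. -/
def IsGenParry (β : ℝ) : Prop :=
  1 < β ∧ ∃ (m : ℕ) (E : ℕ → ℤ), IsGBetaValid m β E ∧ IsPCF β E

/-- `z` is a Galois conjugate of `β`: a root of the minimal polynomial of `β` over `ℚ`
different from `β` itself. -/
def IsGaloisConj (z : ℂ) (β : ℝ) : Prop :=
  z ≠ (β : ℂ) ∧ Polynomial.aeval z (minpoly ℚ β) = 0

/-- `Ω`: the set of all Galois conjugates of all generalized Parry numbers. -/
def OmegaSet : Set ℂ := {z : ℂ | ∃ β : ℝ, IsGenParry β ∧ IsGaloisConj z β}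

/-- `𝓖`: the set of zeros in the open unit disk of functions
`T(w) = 1 + Σ_{j≥1} a_j w^j` with coefficients `a_j ∈ [-1,1]` (the class `𝓕`). -/
def mathcalG : Set ℂ :=
  {l : ℂ | ‖l‖ < 1 ∧ ∃ a : ℕ → ℝ, (∀ j : ℕ, a (j + 1) ∈ Set.Icc (-1 : ℝ) 1) ∧
    1 + ∑' j : ℕ, (a (j + 1) : ℂ) * l ^ (j + 1) = 0}

/-- The itinerary data `It(j)` associated to a finite sequence `(s(j), a(j))_{j=1}^n`. -/
def ItSeq (n : ℕ) (s : ℕ → ℤ) (a : ℕ → ℕ) (j : ℕ) : ℕ :=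
  if j = n then a n else if s (j + 1) = s j then a j else a j - 1

/-- The tail sum `R_j(x) = Σ_{i=j}^{n-1} s(i+1) a(i+1) x^{-i}`. -/
noncomputable def RSum (n : ℕ) (s : ℕ → ℤ) (a : ℕ → ℕ) (j : ℕ) (x : ℝ) : ℝ :=
  ∑ i ∈ Finset.Ico j n, (s (i + 1) : ℝ) * (a (i + 1) : ℝ) * x ^ (-(i : ℤ))

/-- `x ∈ I_k`, for the partition of `[0,1]` into
`I_0 = [0, 1/β]`, `I_k = (k/β, (k+1)/β]` for `1 ≤ k ≤ m-1`, `I_m = (m/β, 1]`. -/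
def memI (β : ℝ) (m k : ℕ) (x : ℝ) : Prop :=
  if k = 0 then x ∈ Set.Icc (0 : ℝ) (1 / β)
  else if k = m then x ∈ Set.Ioc ((m : ℝ) / β) 1
  else x ∈ Set.Ioc ((k : ℝ) / β) (((k : ℝ) + 1) / β)

lemma branchIdx_le {m : ℕ} {β : ℝ} {E : ℕ → ℤ} (h : IsGBetaValid m β E)
    {x : ℝ} (hx : x ∈ Set.Icc (0:ℝ) 1) : branchIdx β x ≤ m := by
  obtain ⟨hm, hmβ, hβm, hE⟩ := h
  have hβ0 : 0 < β := lt_of_le_of_lt (by positivity) hmβ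
  have h1 : β * x ≤ (m : ℝ) + 1 := by nlinarith [hx.1, hx.2]
  have h2 : ⌈β * x⌉ ≤ (m : ℤ) + 1 := Int.ceil_le.2 (by push_cast; linarith)
  unfold branchIdx; omega

lemma gb_sub_mem {m : ℕ} {β : ℝ} {E : ℕ → ℤ} (h : IsGBetaValid m β E)
    {x : ℝ} (hx : x ∈ Set.Icc (0:ℝ) 1) :
    β * x - branchIdx β x ∈ Set.Icc (0:ℝ) 1 := by
  obtain ⟨hm, hmβ, hβm, hE⟩ := h
  have hβ0 : 0 < β := lt_of_le_of_lt (by positivity) hmβ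
  have h0 : 0 ≤ β * x := by nlinarith [hx.1]
  have hc0 : 0 ≤ ⌈β * x⌉ := Int.ceil_nonneg h0
  rcases eq_or_lt_of_le hc0 with hc | hc
  · have : β * x ≤ 0 := by
      have := Int.le_ceil (β * x); rw [← hc] at this; exact_mod_cast this
    have hx0 : β * x = 0 := le_antisymm this h0
    have : branchIdx β x = 0 := by unfold branchIdx; omega
    simp [this, hx0]
  · have hk : (branchIdx β x : ℤ) = ⌈β * x⌉ - 1 := by unfold branchIdx; omega
    have hle : β * x ≤ ⌈β * x⌉ := Int.le_ceil _
    have hlt : (⌈β * x⌉ : ℝ) - 1 < β * x := by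
      have := Int.ceil_lt_add_one (β * x); linarith
    have hkr : (branchIdx β x : ℝ) = (⌈β * x⌉ : ℝ) - 1 := by exact_mod_cast hk
    constructor <;> rw [hkr] <;> linarith

lemma gbeta_mem {m : ℕ} {β : ℝ} {E : ℕ → ℤ} (h : IsGBetaValid m β E)
    {x : ℝ} (hx : x ∈ Set.Icc (0:ℝ) 1) : gbeta β E x ∈ Set.Icc (0:ℝ) 1 := by
  have := gb_sub_mem h hx
  obtain ⟨h0, h1⟩ := this
  unfold gbeta
  split <;> (constructor <;> linarith)

lemma iterate_mem {m : ℕ} {β : ℝ} {E : ℕ → ℤ} (h : IsGBetaValid m β E)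
    (j : ℕ) : (gbeta β E)^[j] 1 ∈ Set.Icc (0:ℝ) 1 := by
  induction j with
  | zero => simp
  | succ j ih => rw [Function.iterate_succ_apply']; exact gbeta_mem h ih

lemma esign_pm {m : ℕ} {β : ℝ} {E : ℕ → ℤ} (h : IsGBetaValid m β E)
    (j : ℕ) : esign β E j = 1 ∨ esign β E j = -1 :=
  h.2.2.2 _ (branchIdx_le h (iterate_mem h _))

lemma csign_pm {m : ℕ} {β : ℝ} {E : ℕ → ℤ} (h : IsGBetaValid m β E)
    (j : ℕ) : csign β E j = 1 ∨ csign β E j = -1 := by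
  induction j with
  | zero => left; simp [csign]
  | succ j ih =>
    rcases Nat.eq_zero_or_pos j with hj | hj
    · subst hj; left; simp [csign]
    · have : csign β E (j + 1) = csign β E j * esign β E j :=
        Finset.prod_Ico_succ_top hj _
      rw [this]
      rcases ih with h1 | h1 <;> rcases esign_pm h j with h2 | h2 <;>
        simp [h1, h2]

lemma csign_succ {β : ℝ} {E : ℕ → ℤ} (j : ℕ) :
    csign β E (j + 2) = csign β E (j + 1) * esign β E (j + 1) :=
  Finset.prod_Ico_succ_top (by omega) _

lemma digit_le {m : ℕ} {β : ℝ} {E : ℕ → ℤ} (h : IsGBetaValid m β E)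
    (j : ℕ) : digit β E j ≤ m + 1 := by
  have := branchIdx_le h (iterate_mem h (j - 1))
  unfold digit; split <;> omega

lemma gbeta_pos {β x : ℝ} {E : ℕ → ℤ} (he : E (branchIdx β x) = 1) :
    gbeta β E x = β * x - branchIdx β x := by unfold gbeta; simp [he]

lemma gbeta_neg {β x : ℝ} {E : ℕ → ℤ} (he : E (branchIdx β x) = -1) :
    gbeta β E x = -(β * x) + branchIdx β x + 1 := by unfold gbeta; simp [he]

lemma recur {m : ℕ} {β : ℝ} {E : ℕ → ℤ} (h : IsGBetaValid m β E) (j : ℕ) :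
    sorbit β E (j + 1) = β * sorbit β E j
      - (csign β E (j + 1) : ℝ) * (digit β E (j + 1) : ℝ) := by
  set x := (gbeta β E)^[j] 1 with hx
  have hE : esign β E (j + 1) = E (branchIdx β x) := by simp [esign, hx]
  have hit : (gbeta β E)^[j + 1] 1 = gbeta β E x := Function.iterate_succ_apply' _ _ _
  have hd : (digit β E (j + 1) : ℝ)
      = if E (branchIdx β x) = 1 then (branchIdx β x : ℝ) else (branchIdx β x : ℝ) + 1 := by
    simp only [digit]
    split <;> simp_all
  unfold sorbit
  rw [csign_succ, hit, hd]
  have hx' : x ∈ Set.Icc (0:ℝ) 1 := iterate_mem h j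
  rcases h.2.2.2 _ (branchIdx_le h hx') with he | he <;> rw [hE, he]
  · rw [gbeta_pos he]; simp; ring
  · rw [gbeta_neg he]; simp [he]; push_cast; ring

lemma sorbit_abs_le {m : ℕ} {β : ℝ} {E : ℕ → ℤ} (h : IsGBetaValid m β E)
    (j : ℕ) : |sorbit β E j| ≤ 1 := by
  have h1 := iterate_mem h j
  have h2 : |(csign β E (j + 1) : ℝ)| = 1 := by
    rcases csign_pm h (j + 1) with hc | hc <;> simp [hc]
  rw [sorbit, abs_mul, h2, one_mul, abs_le]
  constructor <;> [linarith [h1.1]; exact h1.2]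

/-- For a generalized β-transformation and any `z ∈ ℂ` with `|z| > 1`,
the series `Σ_{j≥1} s(j)d(j)z^{-j}` and `Σ_{j≥0} c_j z^{-j}` converge absolutely and
`1 − Σ_{j=1}^∞ s(j)d(j) z^{−j} = (1 − β/z) · Σ_{j=0}^∞ c_j z^{−j}`. -/
theorem stmt1 (m : ℕ) (β : ℝ) (E : ℕ → ℤ) (h : IsGBetaValid m β E)
    (z : ℂ) (hz : 1 < ‖z‖) :
    Summable (fun j : ℕ => ‖(csign β E (j + 1) : ℂ) * (digit β E (j + 1) : ℂ) * z ^ (-(j : ℤ) - 1)‖) ∧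
    Summable (fun j : ℕ => ‖(sorbit β E j : ℂ) * z ^ (-(j : ℤ))‖) ∧
    1 - ∑' j : ℕ, (csign β E (j + 1) : ℂ) * (digit β E (j + 1) : ℂ) * z ^ (-(j : ℤ) - 1)
      = (1 - (β : ℂ) / z) * ∑' j : ℕ, (sorbit β E j : ℂ) * z ^ (-(j : ℤ)) := by
  have hz0 : z ≠ 0 := by
    intro h0; rw [h0] at hz; simp at hz; linarith
  set r : ℝ := ‖z‖⁻¹ with hr
  have hr0 : 0 ≤ r := inv_nonneg.2 (by linarith)
  have hr1 : r < 1 := inv_lt_one_of_one_lt₀ hz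
  have hnorm : ∀ j : ℕ, ‖z ^ (-(j : ℤ))‖ = r ^ j := by
    intro j
    rw [norm_zpow, zpow_neg, zpow_natCast, hr, inv_pow]
  have hgeo : Summable fun j : ℕ => r ^ j := summable_geometric_of_lt_one hr0 hr1
  -- summability of sorbit series
  have hS2 : Summable (fun j : ℕ => ‖(sorbit β E j : ℂ) * z ^ (-(j : ℤ))‖) := by
    apply Summable.of_nonneg_of_le (fun j => norm_nonneg _) _ hgeo
    intro j
    rw [norm_mul, hnorm]
    have h1 : ‖(sorbit β E j : ℂ)‖ ≤ 1 := by
      rw [Complex.norm_real]; exact sorbit_abs_le h j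
    calc ‖(sorbit β E j : ℂ)‖ * r ^ j ≤ 1 * r ^ j := by
            apply mul_le_mul_of_nonneg_right h1 (by positivity)
      _ = r ^ j := one_mul _
  -- summability of digit series
  have hS1 : Summable (fun j : ℕ => ‖(csign β E (j + 1) : ℂ) * (digit β E (j + 1) : ℂ) * z ^ (-(j : ℤ) - 1)‖) := by
    apply Summable.of_nonneg_of_le (fun j => norm_nonneg _) _ (hgeo.mul_left ((m : ℝ) + 1))
    intro j
    have hzz : z ^ (-(j : ℤ) - 1) = z ^ (-(j : ℤ)) * z⁻¹ := by
      rw [zpow_sub_one₀ hz0]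
    rw [norm_mul, norm_mul, hzz, norm_mul, hnorm]
    have hc : ‖(csign β E (j + 1) : ℂ)‖ = 1 := by
      rcases csign_pm h (j + 1) with hc | hc <;> simp [hc]
    have hd : ‖(digit β E (j + 1) : ℂ)‖ ≤ (m : ℝ) + 1 := by
      rw [Complex.norm_natCast]
      exact_mod_cast digit_le h (j + 1)
    have hzi : ‖z⁻¹‖ ≤ 1 := by
      rw [norm_inv]; exact inv_le_one_of_one_le₀ (le_of_lt hz)
    calc ‖(csign β E (j + 1) : ℂ)‖ * ‖(digit β E (j + 1) : ℂ)‖ * (r ^ j * ‖z⁻¹‖)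
        ≤ 1 * ((m : ℝ) + 1) * (r ^ j * 1) := by
          gcongr
          · rw [hc]
      _ = ((m : ℝ) + 1) * r ^ j := by ring
  refine ⟨hS1, hS2, ?_⟩
  -- the identity
  set g : ℕ → ℂ := fun j => (sorbit β E j : ℂ) * z ^ (-(j : ℤ)) with hg
  have hgs : Summable g := Summable.of_norm hS2
  have hgs' : Summable fun j => g (j + 1) := (summable_nat_add_iff 1).2 hgs
  have hkey : ∀ j : ℕ, (csign β E (j + 1) : ℂ) * (digit β E (j + 1) : ℂ) * z ^ (-(j : ℤ) - 1)
      = ((β : ℂ) / z) * g j - g (j + 1) := by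
    intro j
    have hrec := recur h j
    have hrec' : ((csign β E (j + 1) : ℝ) * (digit β E (j + 1) : ℝ) : ℂ)
        = (β : ℂ) * (sorbit β E j : ℂ) - (sorbit β E (j + 1) : ℂ) := by
      push_cast
      have : (csign β E (j + 1) : ℝ) * (digit β E (j + 1) : ℝ)
          = β * sorbit β E j - sorbit β E (j + 1) := by linarith [hrec]
      exact_mod_cast congrArg Complex.ofReal this
    have h1 : (csign β E (j + 1) : ℂ) * (digit β E (j + 1) : ℂ)
        = (β : ℂ) * (sorbit β E j : ℂ) - (sorbit β E (j + 1) : ℂ) := by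
      rw [← hrec']; push_cast; ring
    rw [h1, hg]
    have hz1 : z ^ (-(j : ℤ) - 1) = z ^ (-(j : ℤ)) * z⁻¹ := zpow_sub_one₀ hz0 _
    have hz2 : z ^ (-(j : ℤ) + -1) = z ^ (-(j : ℤ)) * z⁻¹ := by
      rw [zpow_add₀ hz0, zpow_neg_one]
    simp only [Nat.cast_add, Nat.cast_one, neg_add]
    rw [hz1, hz2]
    field_simp
  have hg0 : g 0 = 1 := by
    have : sorbit β E 0 = 1 := by simp [sorbit, csign]
    simp [hg, this]
  calc 1 - ∑' j : ℕ, (csign β E (j + 1) : ℂ) * (digit β E (j + 1) : ℂ) * z ^ (-(j : ℤ) - 1)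
      = 1 - ∑' j : ℕ, (((β : ℂ) / z) * g j - g (j + 1)) := by
        congr 1; exact tsum_congr hkey
    _ = 1 - (((β : ℂ) / z) * ∑' j, g j - ∑' j, g (j + 1)) := by
        rw [Summable.tsum_sub (hgs.mul_left _) hgs', tsum_mul_left]
    _ = 1 - (((β : ℂ) / z) * ∑' j, g j - (∑' j, g j - 1)) := by
        rw [Summable.tsum_eq_zero_add hgs, hg0]; ring
    _ = (1 - (β : ℂ) / z) * ∑' j, g j := by ring
end

section
/- If β is a generalized Parry number, then every Galois conjugate z of β satisfies |z| < 2. -/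
open Finset

namespace GPaux

noncomputable def xs (β : ℝ) (E : ℕ → ℤ) (j : ℕ) : ℝ := (gbeta β E)^[j] 1
noncomputable def es (β : ℝ) (E : ℕ → ℤ) (j : ℕ) : ℤ := E (branchIdx β (xs β E j))
noncomputable def ss (β : ℝ) (E : ℕ → ℤ) (j : ℕ) : ℤ := ∏ l ∈ Finset.range j, es β E l
noncomputable def ds (β : ℝ) (E : ℕ → ℤ) (j : ℕ) : ℕ :=
  if es β E j = 1 then branchIdx β (xs β E j) else branchIdx β (xs β E j) + 1
noncomputable def bs (β : ℝ) (E : ℕ → ℤ) (j : ℕ) : ℤ := ss β E j * ds β E j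
noncomputable def cs (β : ℝ) (E : ℕ → ℤ) (j : ℕ) : ℝ := (ss β E j : ℝ) * xs β E j

lemma branch_mem {β x : ℝ} (h : 0 ≤ β * x) :
    β * x - (branchIdx β x : ℝ) ∈ Set.Icc (0:ℝ) 1 := by
  rcases eq_or_lt_of_le h with h0 | h0
  · have hc : ⌈β * x⌉ = 0 := by rw [← h0]; simp
    unfold branchIdx
    rw [hc]
    simp [← h0]
  · have hc1 : 1 ≤ ⌈β * x⌉ := Int.ceil_pos.mpr h0
    have hk : ((branchIdx β x : ℕ) : ℝ) = (⌈β * x⌉ : ℝ) - 1 := by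
      unfold branchIdx
      have h2 : ((⌈β * x⌉ - 1).toNat : ℤ) = ⌈β * x⌉ - 1 := Int.toNat_of_nonneg (by omega)
      have h3 : (((⌈β * x⌉ - 1).toNat : ℤ) : ℝ) = ((⌈β * x⌉ : ℝ) - 1) := by rw [h2]; push_cast; ring
      exact_mod_cast h3
    rw [hk]
    constructor
    · have := Int.ceil_lt_add_one (β * x)
      linarith
    · have := Int.le_ceil (β * x)
      linarith

lemma branch_le {m : ℕ} {β x : ℝ} (hβ2 : β ≤ m + 1) (hβ0 : 0 ≤ β) (hx : x ≤ 1) (hx0 : 0 ≤ x) :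
    branchIdx β x ≤ m := by
  have ht : β * x ≤ (m : ℝ) + 1 := by
    calc β * x ≤ β * 1 := by nlinarith
    _ ≤ (m:ℝ) + 1 := by linarith
  have : ⌈β * x⌉ ≤ (m : ℤ) + 1 := by
    apply Int.ceil_le.mpr
    push_cast
    exact ht
  unfold branchIdx
  omega

lemma gbeta_eq {β x : ℝ} {E : ℕ → ℤ} (he : E (branchIdx β x) = 1 ∨ E (branchIdx β x) = -1) :
    gbeta β E x = (E (branchIdx β x) : ℝ) *
      (β * x - (if E (branchIdx β x) = 1 then (branchIdx β x : ℝ) else (branchIdx β x : ℝ) + 1)) := by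
  rcases he with he | he <;> simp [gbeta, he] <;> ring

lemma xs_zero (β : ℝ) (E : ℕ → ℤ) : xs β E 0 = 1 := rfl

lemma xs_succ (β : ℝ) (E : ℕ → ℤ) (j : ℕ) : xs β E (j+1) = gbeta β E (xs β E j) := by
  unfold xs
  rw [Function.iterate_succ_apply']

lemma xs_mem {β : ℝ} {E : ℕ → ℤ} (hβ0 : 0 < β) (j : ℕ) : xs β E j ∈ Set.Icc (0:ℝ) 1 := by
  induction j with
  | zero => exact ⟨zero_le_one, le_refl 1⟩
  | succ n ih =>
    rw [xs_succ]
    set x := xs β E n with hx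
    have h0 : 0 ≤ β * x := mul_nonneg hβ0.le ih.1
    have hb := branch_mem h0
    unfold gbeta
    split
    · exact ⟨hb.1, hb.2⟩
    · constructor <;> [linarith [hb.2]; linarith [hb.1]]

end GPaux
namespace GPaux

variable {m : ℕ} {β : ℝ} {E : ℕ → ℤ}

lemma es_pm (hv : IsGBetaValid m β E) (j : ℕ) : es β E j = 1 ∨ es β E j = -1 := by
  obtain ⟨hm, hb1, hb2, hE⟩ := hv
  have hβ0 : (0:ℝ) < β := lt_of_le_of_lt (by positivity) hb1
  have hx := xs_mem (E := E) hβ0 j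
  exact hE _ (branch_le hb2 hβ0.le hx.2 hx.1)

lemma es_sq (hv : IsGBetaValid m β E) (j : ℕ) : es β E j * es β E j = 1 := by
  rcases es_pm hv j with h | h <;> rw [h] <;> norm_num

lemma ss_sq (hv : IsGBetaValid m β E) (j : ℕ) : ss β E j * ss β E j = 1 := by
  induction j with
  | zero => simp [ss]
  | succ n ih =>
    unfold ss at *
    rw [Finset.prod_range_succ]
    have := es_sq hv n
    nlinarith [this, ih]

lemma ss_succ (β : ℝ) (E : ℕ → ℤ) (j : ℕ) : ss β E (j+1) = es β E j * ss β E j := by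
  unfold ss; rw [Finset.prod_range_succ]; ring

lemma ds_le (hv : IsGBetaValid m β E) (j : ℕ) : ds β E j ≤ m + 1 := by
  obtain ⟨hm, hb1, hb2, hE⟩ := hv
  have hβ0 : (0:ℝ) < β := lt_of_le_of_lt (by positivity) hb1
  have hx := xs_mem (E := E) hβ0 j
  have hk := branch_le hb2 hβ0.le hx.2 hx.1
  unfold ds; split <;> omega

lemma bs_abs (hv : IsGBetaValid m β E) (j : ℕ) : |bs β E j| ≤ (m : ℤ) + 1 := by
  have hd := ds_le hv j
  have hs : |ss β E j| = 1 := by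
    have := ss_sq hv j
    nlinarith [abs_nonneg (ss β E j), sq_abs (ss β E j)]
  unfold bs
  rw [abs_mul, hs, one_mul]
  rw [abs_of_nonneg (by positivity)]
  exact_mod_cast hd

lemma cs_zero (β : ℝ) (E : ℕ → ℤ) : cs β E 0 = 1 := by simp [cs, ss, xs]

lemma cs_abs (hv : IsGBetaValid m β E) (j : ℕ) : |cs β E j| ≤ 1 := by
  obtain ⟨hm, hb1, hb2, hE⟩ := hv
  have hβ0 : (0:ℝ) < β := lt_of_le_of_lt (by positivity) hb1
  have hx := xs_mem (E := E) hβ0 j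
  have hs : |ss β E j| = 1 := by
    have := ss_sq ⟨hm, hb1, hb2, hE⟩ j
    nlinarith [abs_nonneg (ss β E j), sq_abs (ss β E j)]
  unfold cs
  rw [abs_mul]
  have : |(ss β E j : ℝ)| = 1 := by exact_mod_cast congrArg (Int.cast : ℤ → ℝ) hs
  rw [this, one_mul, abs_of_nonneg hx.1]
  exact hx.2

lemma cs_rec (hv : IsGBetaValid m β E) (j : ℕ) :
    cs β E (j+1) = β * cs β E j - (bs β E j : ℝ) := by
  have he := es_pm hv j
  have hgb := gbeta_eq (β := β) (x := xs β E j) (E := E) he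
  have hx1 : xs β E (j+1) = (es β E j : ℝ) * (β * xs β E j - (ds β E j : ℝ)) := by
    rw [xs_succ, hgb]
    by_cases hcase : E (branchIdx β (xs β E j)) = 1 <;>
      simp only [es, ds, hcase, if_pos, if_neg, if_true, if_false] <;>
      push_cast <;> ring
  unfold cs bs
  rw [hx1, ss_succ]
  have hee : (es β E j : ℝ) * (es β E j : ℝ) = 1 := by exact_mod_cast es_sq hv j
  push_cast
  linear_combination ((ss β E j : ℝ) * (β * xs β E j - (ds β E j : ℝ))) * hee

lemma beta_pow (hv : IsGBetaValid m β E) (n : ℕ) :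
    β ^ n = cs β E n + ∑ j ∈ Finset.range n, (bs β E j : ℝ) * β ^ (n - 1 - j) := by
  induction n with
  | zero => simp [cs_zero]
  | succ n ih =>
    have h1 : β ^ (n+1) = β * β ^ n := by ring
    rw [h1, ih, mul_add, Finset.mul_sum, Finset.sum_range_succ]
    rw [cs_rec hv n]
    have hstep : ∀ j ∈ Finset.range n, β * ((bs β E j : ℝ) * β ^ (n - 1 - j)) =
        (bs β E j : ℝ) * β ^ (n + 1 - 1 - j) := by
      intro j hj
      have hj' : j < n := Finset.mem_range.mp hj
      have : n + 1 - 1 - j = (n - 1 - j) + 1 := by omega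
      rw [this, pow_succ]
      ring
    rw [Finset.sum_congr rfl hstep]
    have : n + 1 - 1 - n = 0 := by omega
    rw [this]
    ring

end GPaux
namespace GPaux

variable {m : ℕ} {β : ℝ} {E : ℕ → ℤ} {p r : ℕ}

lemma xs_per (hx : xs β E (p + r) = xs β E p) :
    ∀ j, p ≤ j → xs β E (j + r) = xs β E j := by
  intro j hj
  induction j, hj using Nat.le_induction with
  | base => exact hx
  | succ n hn ih =>
    have h1 : n + 1 + r = (n + r) + 1 := by omega
    rw [h1, xs_succ, ih, ← xs_succ]

lemma es_per (hx : xs β E (p + r) = xs β E p) :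
    ∀ j, p ≤ j → es β E (j + r) = es β E j := by
  intro j hj; unfold es; rw [xs_per hx j hj]

lemma ds_per (hx : xs β E (p + r) = xs β E p) :
    ∀ j, p ≤ j → ds β E (j + r) = ds β E j := by
  intro j hj; unfold ds es; rw [xs_per hx j hj]

lemma ss_per (hv : IsGBetaValid m β E) (hx : xs β E (p + r) = xs β E p) :
    ∀ j, p ≤ j → ss β E (j + r) = (ss β E (p+r) * ss β E p) * ss β E j := by
  intro j hj
  induction j, hj using Nat.le_induction with
  | base =>
    have h2 := ss_sq hv p
    rw [mul_assoc, h2, mul_one]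
  | succ n hn ih =>
    have h1 : n + 1 + r = (n + r) + 1 := by omega
    rw [h1, ss_succ, ss_succ, ih, es_per hx n hn]
    ring

lemma bs_per (hv : IsGBetaValid m β E) (hx : xs β E (p + r) = xs β E p) :
    ∀ j, p ≤ j → bs β E (j + r) = (ss β E (p+r) * ss β E p) * bs β E j := by
  intro j hj
  unfold bs
  rw [ss_per hv hx j hj, ds_per hx j hj]
  ring

lemma bs_per_pow (hv : IsGBetaValid m β E) (hx : xs β E (p + r) = xs β E p) :
    ∀ (k j : ℕ), p ≤ j → bs β E (j + k * r) = (ss β E (p+r) * ss β E p)^k * bs β E j := by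
  intro k
  induction k with
  | zero => intro j hj; simp
  | succ k ih =>
    intro j hj
    have h1 : j + (k+1) * r = (j + k * r) + r := by ring
    rw [h1, bs_per hv hx _ (by omega), ih j hj]
    ring

lemma sigma_sq (hv : IsGBetaValid m β E) :
    (ss β E (p+r) * ss β E p) * (ss β E (p+r) * ss β E p) = 1 := by
  have h1 := ss_sq hv (p+r)
  have h2 := ss_sq hv p
  nlinarith [h1, h2]

end GPaux
namespace GPaux

open Polynomial

variable {m : ℕ} {β : ℝ} {E : ℕ → ℤ} {p r : ℕ}

noncomputable def Qpoly (β : ℝ) (E : ℕ → ℤ) (p r : ℕ) : Polynomial ℚ :=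
  X^(p+r) - (∑ j ∈ Finset.range (p+r), C ((bs β E j : ℚ)) * X^(p+r-1-j))
  - C (((ss β E (p+r) * ss β E p : ℤ) : ℚ)) *
      (X^p - ∑ j ∈ Finset.range p, C ((bs β E j : ℚ)) * X^(p-1-j))

lemma aeval_Qpoly {A : Type} [CommRing A] [Algebra ℚ A] (x : A) :
    Polynomial.aeval x (Qpoly β E p r) =
      (x^(p+r) - ∑ j ∈ Finset.range (p+r), ((bs β E j : ℤ) : A) * x^(p+r-1-j))
      - ((ss β E (p+r) * ss β E p : ℤ) : A) *
        (x^p - ∑ j ∈ Finset.range p, ((bs β E j : ℤ) : A) * x^(p-1-j)) := by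
  simp [Qpoly, map_sub, map_sum, map_mul, map_pow, aeval_X, aeval_C, map_intCast]

lemma aeval_Qpoly_beta (hv : IsGBetaValid m β E) (hx : xs β E (p + r) = xs β E p) :
    Polynomial.aeval β (Qpoly β E p r) = 0 := by
  rw [aeval_Qpoly]
  have h1 := beta_pow hv (p+r)
  have h2 := beta_pow hv p
  have e1 : β^(p+r) - ∑ j ∈ Finset.range (p+r), ((bs β E j : ℤ) : ℝ) * β^(p+r-1-j)
      = cs β E (p+r) := by rw [h1]; push_cast; ring
  have e2 : β^p - ∑ j ∈ Finset.range p, ((bs β E j : ℤ) : ℝ) * β^(p-1-j)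
      = cs β E p := by rw [h2]; push_cast; ring
  rw [e1, e2]
  unfold cs
  rw [hx]
  have h3 : (ss β E p : ℝ) * (ss β E p : ℝ) = 1 := by exact_mod_cast ss_sq hv p
  push_cast
  linear_combination (-((ss β E (p+r) : ℝ) * xs β E p)) * h3

lemma Qpoly_coeff (hr : 1 ≤ r) : (Qpoly β E p r).coeff (p+r) = 1 := by
  unfold Qpoly
  rw [coeff_sub, coeff_sub, coeff_X_pow]
  have hs1 : (∑ j ∈ Finset.range (p+r), C ((bs β E j : ℚ)) * X^(p+r-1-j)).coeff (p+r) = 0 := by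
    rw [finset_sum_coeff]
    apply Finset.sum_eq_zero
    intro j hj
    rw [coeff_C_mul, coeff_X_pow, if_neg (by omega), mul_zero]
  have hs2 : (C (((ss β E (p+r) * ss β E p : ℤ) : ℚ)) *
      (X^p - ∑ j ∈ Finset.range p, C ((bs β E j : ℚ)) * X^(p-1-j))).coeff (p+r) = 0 := by
    rw [coeff_C_mul, coeff_sub, coeff_X_pow, if_neg (by omega), finset_sum_coeff]
    rw [Finset.sum_eq_zero, sub_zero, mul_zero]
    intro j hj
    have hj' : j < p := Finset.mem_range.mp hj
    rw [coeff_C_mul, coeff_X_pow, if_neg (by omega), mul_zero]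
  rw [hs1, hs2, if_pos rfl]
  ring

lemma Qpoly_ne_zero (hr : 1 ≤ r) : Qpoly β E p r ≠ 0 := by
  intro h
  have := Qpoly_coeff (β := β) (E := E) (p := p) hr
  rw [h, coeff_zero] at this
  norm_num at this

end GPaux
namespace GPaux

open Filter

variable {m : ℕ} {β : ℝ} {E : ℕ → ℤ} {p r : ℕ}

lemma pow_mul_inv_pow {z : ℂ} (hz0 : z ≠ 0) {a b c : ℕ} (h : a = b + c) :
    z ^ a * (z⁻¹) ^ b = z ^ c := by
  subst h
  rw [pow_add, inv_pow]
  field_simp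

lemma sum_range_add_aux (f : ℕ → ℂ) (a n : ℕ) :
    ∑ j ∈ Finset.range (a + n), f j
      = ∑ j ∈ Finset.range a, f j + ∑ i ∈ Finset.range n, f (a + i) := by
  induction n with
  | zero => simp
  | succ n ih =>
    have h1 : a + (n + 1) = (a + n) + 1 := by omega
    rw [h1, Finset.sum_range_succ, ih, Finset.sum_range_succ]
    ring

/-- The key analytic lemma: the signed-orbit generating series vanishes at `1/z`. -/
lemma key_tsum (hv : IsGBetaValid m β E) (hx : xs β E (p + r) = xs β E p) (hr : 1 ≤ r)
    {z : ℂ} (hz1 : 1 < ‖z‖) (hQz : Polynomial.aeval z (Qpoly β E p r) = 0)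
    (hzβ : z ≠ (β : ℂ)) :
    ∑' j : ℕ, ((cs β E j : ℝ) : ℂ) * (z⁻¹) ^ j = 0 := by
  have hz0 : z ≠ 0 := by
    intro h; rw [h] at hz1; simp at hz1; linarith
  set w : ℂ := z⁻¹ with hwdef
  have hw : ‖w‖ < 1 := by
    rw [hwdef, norm_inv]
    rw [inv_lt_one_iff₀]
    right; exact hz1
  have hw0 : 0 ≤ ‖w‖ := norm_nonneg _
  set σ : ℤ := ss β E (p+r) * ss β E p with hσdef
  have hσ2 : σ * σ = 1 := sigma_sq hv
  have hσpm : σ = 1 ∨ σ = -1 := Int.isUnit_iff.mp (IsUnit.of_mul_eq_one _ hσ2)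
  have hσnorm : ‖(σ : ℂ)‖ = 1 := by rcases hσpm with h | h <;> rw [h] <;> simp
  -- the coefficient series f
  set f : ℕ → ℂ := fun j => ((bs β E j : ℤ) : ℂ) * w ^ (j+1) with hfdef
  have hfnorm : ∀ j, ‖f j‖ ≤ ((m : ℝ) + 1) * ‖w‖ ^ (j+1) := by
    intro j
    rw [hfdef]
    simp only [norm_mul, norm_pow, Complex.norm_intCast]
    apply mul_le_mul_of_nonneg_right _ (by positivity)
    have := bs_abs hv j
    have h2 : |(bs β E j : ℝ)| ≤ (m : ℝ) + 1 := by exact_mod_cast this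
    exact h2
  have hgeom : Summable (fun j : ℕ => ((m : ℝ) + 1) * ‖w‖ ^ (j+1)) := by
    have h1 : Summable (fun j : ℕ => ‖w‖ ^ j) := summable_geometric_of_lt_one hw0 hw
    have h2 := (h1.mul_left (((m : ℝ) + 1) * ‖w‖))
    apply h2.congr
    intro j
    rw [pow_succ']
    ring
  have hfs : Summable f := Summable.of_norm_bounded hgeom hfnorm
  set A : ℕ → ℂ := fun n => ∑ j ∈ Finset.range n, f j with hAdef
  -- the star identity from the polynomial relation
  have hstar : 1 - A (p+r) = (σ : ℂ) * w ^ r * (1 - A p) := by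
    rw [aeval_Qpoly] at hQz
    have hzpr : z ^ (p+r) ≠ 0 := pow_ne_zero _ hz0
    apply mul_left_cancel₀ hzpr
    have key1 : z^(p+r) * (1 - A (p+r))
        = z^(p+r) - ∑ j ∈ Finset.range (p+r), ((bs β E j : ℤ) : ℂ) * z^(p+r-1-j) := by
      rw [mul_sub, mul_one, hAdef, Finset.mul_sum]
      congr 1
      apply Finset.sum_congr rfl
      intro j hj
      have hj' : j < p + r := Finset.mem_range.mp hj
      have hpw := pow_mul_inv_pow hz0 (show p+r = (j+1) + (p+r-1-j) by omega)
      rw [hfdef]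
      calc z^(p+r) * (((bs β E j : ℤ) : ℂ) * w^(j+1))
          = ((bs β E j : ℤ) : ℂ) * (z^(p+r) * (z⁻¹)^(j+1)) := by rw [hwdef]; ring
        _ = ((bs β E j : ℤ) : ℂ) * z^(p+r-1-j) := by rw [hpw]
    have key2 : z^(p+r) * ((σ : ℂ) * w ^ r * (1 - A p))
        = (σ : ℂ) * (z^p - ∑ j ∈ Finset.range p, ((bs β E j : ℤ) : ℂ) * z^(p-1-j)) := by
      have hpw0 := pow_mul_inv_pow hz0 (show p+r = r + p by omega)
      have e1 : z^(p+r) * ((σ : ℂ) * w ^ r * (1 - A p))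
          = (σ : ℂ) * (z^p * (1 - A p)) := by
        rw [hwdef]
        calc z^(p+r) * ((σ : ℂ) * (z⁻¹) ^ r * (1 - A p))
            = (σ : ℂ) * ((z^(p+r) * (z⁻¹)^r) * (1 - A p)) := by ring
          _ = (σ : ℂ) * (z^p * (1 - A p)) := by rw [hpw0]
      rw [e1]
      congr 1
      rw [mul_sub, mul_one, hAdef, Finset.mul_sum]
      congr 1
      apply Finset.sum_congr rfl
      intro j hj
      have hj' : j < p := Finset.mem_range.mp hj
      have hpw := pow_mul_inv_pow hz0 (show p = (j+1) + (p-1-j) by omega)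
      rw [hfdef]
      calc z^p * (((bs β E j : ℤ) : ℂ) * w^(j+1))
          = ((bs β E j : ℤ) : ℂ) * (z^p * (z⁻¹)^(j+1)) := by rw [hwdef]; ring
        _ = ((bs β E j : ℤ) : ℂ) * z^(p-1-j) := by rw [hpw]
    rw [key1, key2]
    linear_combination hQz
  -- iterated star identity
  have hA : ∀ k : ℕ, 1 - A (p + k * r) = ((σ : ℂ) * w ^ r) ^ k * (1 - A p) := by
    intro k
    induction k with
    | zero => simp
    | succ k ih =>
      have hsplit : A (p + (k+1) * r) = A (p + k * r) + ∑ i ∈ Finset.range r, f (p + k*r + i) := by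
        have h1 : p + (k+1) * r = (p + k * r) + r := by ring
        rw [h1]
        exact sum_range_add_aux f (p + k*r) r
      have hsplit0 : A (p + r) = A p + ∑ i ∈ Finset.range r, f (p + i) :=
        sum_range_add_aux f p r
      have hshift : ∑ i ∈ Finset.range r, f (p + k*r + i)
          = ((σ : ℂ) * w ^ r) ^ k * ∑ i ∈ Finset.range r, f (p + i) := by
        rw [Finset.mul_sum]
        apply Finset.sum_congr rfl
        intro i hi
        have hb := bs_per_pow hv hx k (p + i) (by omega)
        have harg : p + k * r + i = (p + i) + k * r := by ring
        show ((bs β E (p + k*r + i) : ℤ) : ℂ) * w ^ ((p + k*r + i) + 1) = _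
        rw [harg, hb]
        have hwk : ((σ : ℂ) * w^r)^k = (σ : ℂ)^k * w^(k*r) := by
          rw [mul_pow, ← pow_mul, Nat.mul_comm r k]
        rw [hwk]
        simp only [hσdef]
        have hexp : (p + i) + k * r + 1 = (k * r) + ((p + i) + 1) := by ring
        rw [hexp, pow_add]
        push_cast
        ring
      calc 1 - A (p + (k+1) * r)
          = (1 - A (p + k*r)) - ∑ i ∈ Finset.range r, f (p + k*r + i) := by rw [hsplit]; ring
        _ = ((σ : ℂ) * w ^ r) ^ k * (1 - A p)
            - ((σ : ℂ) * w ^ r) ^ k * ∑ i ∈ Finset.range r, f (p + i) := by rw [ih, hshift]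
        _ = ((σ : ℂ) * w ^ r) ^ k * (1 - A (p + r)) := by rw [hsplit0]; ring
        _ = ((σ : ℂ) * w ^ r) ^ (k+1) * (1 - A p) := by rw [hstar]; ring
  -- pass to the limit: S = 1
  have hS : HasSum f (∑' j, f j) := hfs.hasSum
  have htendA : Tendsto A atTop (nhds (∑' j, f j)) := hS.tendsto_sum_nat
  have hmono : Tendsto (fun k : ℕ => p + k * r) atTop atTop := by
    apply Filter.tendsto_atTop_mono (f := fun k : ℕ => k)
    · intro k
      have : k * 1 ≤ k * r := Nat.mul_le_mul_left k hr
      omega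
    · exact tendsto_id
  have htend1 : Tendsto (fun k => A (p + k * r)) atTop (nhds (∑' j, f j)) :=
    htendA.comp hmono
  have hpowlt : ‖(σ : ℂ) * w ^ r‖ < 1 := by
    rw [norm_mul, hσnorm, one_mul, norm_pow]
    calc ‖w‖ ^ r ≤ ‖w‖ := pow_le_of_le_one hw0 hw.le (by omega)
      _ < 1 := hw
  have htend2 : Tendsto (fun k => A (p + k * r)) atTop (nhds 1) := by
    have h0 : Tendsto (fun k : ℕ => ((σ : ℂ) * w ^ r) ^ k) atTop (nhds 0) :=
      tendsto_pow_atTop_nhds_zero_of_norm_lt_one hpowlt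
    have h1 : Tendsto (fun k : ℕ => 1 - ((σ : ℂ) * w ^ r) ^ k * (1 - A p)) atTop
        (nhds (1 - 0 * (1 - A p))) :=
      tendsto_const_nhds.sub (h0.mul_const _)
    rw [zero_mul, sub_zero] at h1
    apply h1.congr
    intro k
    have := hA k
    linear_combination this
  have hSeq : (∑' j, f j) = 1 := tendsto_nhds_unique htend1 htend2
  -- the c-series
  set g : ℕ → ℂ := fun j => ((cs β E j : ℝ) : ℂ) * w ^ j with hgdef
  have hgnorm : ∀ j, ‖g j‖ ≤ ‖w‖ ^ j := by
    intro j
    rw [hgdef]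
    simp only [norm_mul, norm_pow, Complex.norm_real]
    have h1 : ‖cs β E j‖ ≤ 1 := by
      rw [Real.norm_eq_abs]; exact cs_abs hv j
    calc ‖cs β E j‖ * ‖w‖ ^ j ≤ 1 * ‖w‖ ^ j := mul_le_mul_of_nonneg_right h1 (by positivity)
      _ = ‖w‖ ^ j := one_mul _
  have hgs : Summable g :=
    Summable.of_norm_bounded (summable_geometric_of_lt_one hw0 hw) hgnorm
  have hgs1 : Summable (fun j => g (j+1)) := (summable_nat_add_iff 1).mpr hgs
  have hkey : (1 - (β : ℂ) * w) * (∑' j, g j) = 1 - ∑' j, f j := by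
    have e0 : ∑' j, g j = g 0 + ∑' j, g (j+1) := Summable.tsum_eq_zero_add hgs
    have e1 : g 0 = 1 := by rw [hgdef]; simp [cs_zero]
    have e2 : (β : ℂ) * w * (∑' j, g j) = ∑' j, ((β : ℂ) * w * g j) := by
      rw [tsum_mul_left]
    have e3 : ∀ j, (β : ℂ) * w * g j = g (j+1) + f j := by
      intro j
      rw [hgdef, hfdef]
      simp only
      have hrec := cs_rec hv j
      have : ((cs β E (j+1) : ℝ) : ℂ) = (β : ℂ) * ((cs β E j : ℝ) : ℂ) - ((bs β E j : ℤ) : ℂ) := by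
        rw [hrec]; push_cast; ring
      rw [this, pow_succ]
      ring
    have e4 : ∑' j, ((β : ℂ) * w * g j) = (∑' j, g (j+1)) + ∑' j, f j := by
      rw [tsum_congr e3, Summable.tsum_add hgs1 hfs]
    have h5 := e2.trans e4
    linear_combination -h5 + e0 + e1
  rw [hSeq, sub_self] at hkey
  have hne : (1 - (β : ℂ) * w) ≠ 0 := by
    intro hcon
    apply hzβ
    have : (β : ℂ) * w = 1 := by linear_combination -hcon
    rw [hwdef] at this
    field_simp at this
    exact this.symm
  exact (mul_eq_zero.mp hkey).resolve_left hne

end GPaux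

namespace GPaux

open Polynomial

lemma rat_root_eq (β : ℝ) (hint : IsIntegral ℚ β) {z : ℂ}
    (hz2 : Polynomial.aeval z (minpoly ℚ β) = 0) (q0 : ℚ) (hq : z = (q0 : ℂ)) :
    z = ((β : ℝ) : ℂ) := by
  have halg : ((q0 : ℂ)) = algebraMap ℚ ℂ q0 := by norm_num
  have heval : (minpoly ℚ β).eval q0 = 0 := by
    apply (algebraMap ℚ ℂ).injective
    rw [map_zero]
    have h1 : Polynomial.aeval ((q0 : ℂ)) (minpoly ℚ β) = 0 := by rw [← hq]; exact hz2
    rw [halg] at h1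
    rw [← h1]
    rw [Polynomial.aeval_def, Polynomial.eval₂_at_apply]
  have hdvd2 : X - C q0 ∣ minpoly ℚ β := dvd_iff_isRoot.mpr heval
  obtain ⟨u, hu⟩ := hdvd2
  have hunit : IsUnit u :=
    ((minpoly.irreducible hint).isUnit_or_isUnit hu).resolve_left
      (Polynomial.not_isUnit_X_sub_C q0)
  have hassoc : Associated (X - C q0) (minpoly ℚ β) :=
    ⟨hunit.unit, by rw [IsUnit.unit_spec]; exact hu.symm⟩
  have hP : minpoly ℚ β = X - C q0 :=
    Polynomial.eq_of_monic_of_associated (minpoly.monic hint) (monic_X_sub_C q0) hassoc.symm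
  have hβq : β = (q0 : ℝ) := by
    have h2 : Polynomial.aeval β (minpoly ℚ β) = 0 := minpoly.aeval ℚ β
    rw [hP] at h2
    simp only [map_sub, aeval_X, aeval_C] at h2
    have : algebraMap ℚ ℝ q0 = (q0 : ℝ) := by norm_num
    rw [this] at h2
    linarith
  rw [hq, hβq]
  push_cast
  ring

end GPaux

/-- If `β` is a generalized Parry number, then all Galois conjugates `z` of `β`
satisfy `|z| < 2`. -/
theorem stmt6 (β : ℝ) (h : IsGenParry β) (z : ℂ) (hz : IsGaloisConj z β) : ‖z‖ < 2 := by
  obtain ⟨hβ1, m, E, hv, hpcf⟩ := h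
  -- find a repetition in the orbit
  have hfin : (Set.range fun j : ℕ => GPaux.xs β E j).Finite := by
    apply hpcf.subset
    rintro x ⟨j, rfl⟩
    exact ⟨j, rfl⟩
  have hninj : ¬ Function.Injective (fun j : ℕ => GPaux.xs β E j) := by
    intro hinj
    exact (Set.infinite_range_of_injective hinj) hfin
  rw [Function.not_injective_iff] at hninj
  obtain ⟨a, b, hab, hne⟩ := hninj
  obtain ⟨p, q, hpq, hxe⟩ : ∃ p q : ℕ, p < q ∧ GPaux.xs β E q = GPaux.xs β E p := by
    rcases Nat.lt_or_ge a b with hlt | hge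
    · exact ⟨a, b, hlt, hab.symm⟩
    · exact ⟨b, a, lt_of_le_of_ne hge (Ne.symm hne), hab⟩
  set r := q - p with hrdef
  have hr : 1 ≤ r := by omega
  have hx : GPaux.xs β E (p + r) = GPaux.xs β E p := by
    have hpr : p + r = q := by omega
    rw [hpr]; exact hxe
  -- the trivial case
  rcases le_or_gt ‖z‖ 1 with hle | hgt
  · linarith
  -- β is a root of Qpoly, hence so is z
  have hQβ := GPaux.aeval_Qpoly_beta hv hx
  obtain ⟨g0, hg0⟩ := minpoly.dvd ℚ β hQβ
  have hQz : Polynomial.aeval z (GPaux.Qpoly β E p r) = 0 := by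
    rw [hg0, map_mul, hz.2, zero_mul]
  have hint : IsIntegral ℚ β :=
    IsAlgebraic.isIntegral ⟨GPaux.Qpoly β E p r, GPaux.Qpoly_ne_zero hr, hQβ⟩
  -- the generating series of the signed orbit vanishes at 1/z
  have hC := GPaux.key_tsum hv hx hr hgt hQz hz.1
  set w : ℂ := z⁻¹ with hwdef
  have hz0 : z ≠ 0 := by
    intro h0
    rw [h0] at hgt; simp at hgt; linarith
  have hw : ‖w‖ < 1 := by
    rw [hwdef, norm_inv, inv_lt_one_iff₀]; right; exact hgt
  have hw0 : (0:ℝ) ≤ ‖w‖ := norm_nonneg _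
  set g : ℕ → ℂ := fun j => ((GPaux.cs β E j : ℝ) : ℂ) * w ^ j with hgdef
  have hgnorm : ∀ j, ‖g j‖ ≤ ‖w‖ ^ j := by
    intro j
    rw [hgdef]
    simp only [norm_mul, norm_pow, Complex.norm_real]
    have h1 : ‖GPaux.cs β E j‖ ≤ 1 := by
      rw [Real.norm_eq_abs]; exact GPaux.cs_abs hv j
    calc ‖GPaux.cs β E j‖ * ‖w‖ ^ j ≤ 1 * ‖w‖ ^ j :=
          mul_le_mul_of_nonneg_right h1 (by positivity)
      _ = ‖w‖ ^ j := one_mul _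
  have hgs : Summable g :=
    Summable.of_norm_bounded (summable_geometric_of_lt_one hw0 hw) hgnorm
  have hgs1 : Summable (fun j => g (j+1)) := (summable_nat_add_iff 1).mpr hgs
  have hg0' : g 0 = 1 := by rw [hgdef]; simp [GPaux.cs_zero]
  have hT : ∑' j : ℕ, g (j+1) = -1 := by
    have e0 : ∑' j, g j = g 0 + ∑' j, g (j+1) := Summable.tsum_eq_zero_add hgs
    rw [hC] at e0
    rw [hg0'] at e0
    linear_combination -e0
  -- the norm bound
  have hnorms1 : Summable (fun j : ℕ => ‖w‖ ^ (j+1)) :=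
    (summable_nat_add_iff 1).mpr (summable_geometric_of_lt_one hw0 hw)
  have hnormg1 : Summable (fun j : ℕ => ‖g (j+1)‖) :=
    Summable.of_nonneg_of_le (fun j => norm_nonneg _) (fun j => hgnorm (j+1)) hnorms1
  have hbound : (1:ℝ) ≤ ‖w‖ * (1 - ‖w‖)⁻¹ := by
    have h1 : ‖∑' j : ℕ, g (j+1)‖ ≤ ∑' j : ℕ, ‖g (j+1)‖ := norm_tsum_le_tsum_norm hnormg1
    have h2 : ∑' j : ℕ, ‖g (j+1)‖ ≤ ∑' j : ℕ, ‖w‖ ^ (j+1) :=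
      Summable.tsum_le_tsum (fun j => hgnorm (j+1)) hnormg1 hnorms1
    have h3 : ∑' j : ℕ, ‖w‖ ^ (j+1) = ‖w‖ * (1 - ‖w‖)⁻¹ := by
      have h4 : ∀ j : ℕ, ‖w‖ ^ (j+1) = ‖w‖ * ‖w‖ ^ j := by
        intro j; rw [pow_succ]; ring
      rw [tsum_congr h4, tsum_mul_left, tsum_geometric_of_lt_one hw0 hw]
    rw [hT] at h1
    simp only [norm_neg, norm_one] at h1
    linarith [h1.trans (h2.trans_eq h3)]
  -- suppose for contradiction ‖z‖ ≥ 2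
  by_contra hcon
  push_neg at hcon
  have hwle : ‖w‖ ≤ 1/2 := by
    rw [hwdef, norm_inv]
    have h5 : (2:ℝ) ≤ ‖z‖ := hcon
    calc ‖z‖⁻¹ ≤ (2:ℝ)⁻¹ := by
          apply inv_anti₀ (by norm_num) h5
      _ = 1/2 := by norm_num
  have h1mw : (0:ℝ) < 1 - ‖w‖ := by linarith
  have hwge : (1:ℝ)/2 ≤ ‖w‖ := by
    have h6 := mul_le_mul_of_nonneg_right hbound h1mw.le
    rw [one_mul, mul_assoc, inv_mul_cancel₀ (ne_of_gt h1mw), mul_one] at h6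
    linarith
  have hweq : ‖w‖ = 1/2 := le_antisymm hwle hwge
  -- equality analysis: every term of the series is a negative real
  have ht : HasSum (fun j => g (j+1)) (-1 : ℂ) := hT ▸ hgs1.hasSum
  have hre : HasSum (fun j => (g (j+1)).re) (-1 : ℝ) := by
    have := (Complex.hasSum_iff _ _).mp ht
    simpa using this.1
  have hgeoms : HasSum (fun j : ℕ => ((1:ℝ)/2) ^ (j+1)) 1 := by
    have h7 : HasSum (fun j : ℕ => ((1:ℝ)/2) ^ j) 2 := by
      have := hasSum_geometric_of_lt_one (by norm_num : (0:ℝ) ≤ 1/2) (by norm_num : (1:ℝ)/2 < 1)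
      norm_num at this
      exact this
    rw [hasSum_nat_add_iff 1]
    convert h7 using 1
    · rfl
    · norm_num
  have hG : HasSum (fun j => ((1:ℝ)/2) ^ (j+1) + (g (j+1)).re) 0 := by
    have := hgeoms.add hre
    norm_num at this
    exact this
  have hGnonneg : ∀ j, 0 ≤ ((1:ℝ)/2) ^ (j+1) + (g (j+1)).re := by
    intro j
    have h9 : |(g (j+1)).re| ≤ ‖g (j+1)‖ := Complex.abs_re_le_norm _
    have h10 : ‖g (j+1)‖ ≤ ((1:ℝ)/2) ^ (j+1) := by
      have := hgnorm (j+1)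
      rwa [hweq] at this
    have := abs_le.mp h9
    linarith [this.1]
  have hGzero : ∀ j, ((1:ℝ)/2) ^ (j+1) + (g (j+1)).re = 0 := by
    intro j
    have h11 : ((1:ℝ)/2) ^ (j+1) + (g (j+1)).re ≤ 0 := by
      have := Summable.le_tsum hG.summable j (fun i _ => hGnonneg i)
      rwa [hG.tsum_eq] at this
    linarith [hGnonneg j]
  -- term j = 0 forces w (hence z) to be real
  have hg1re : (g 1).re = -(1/2 : ℝ) := by
    have := hGzero 0
    norm_num at this ⊢
    linarith
  have hg1norm : ‖g 1‖ ≤ (1/2 : ℝ) := by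
    have := hgnorm 1
    rw [hweq] at this
    norm_num at this ⊢
    exact this
  have hg1im : (g 1).im = 0 := by
    have h12 : (g 1).re ^ 2 + (g 1).im ^ 2 ≤ (1/2 : ℝ)^2 := by
      have h13 : ‖g 1‖^2 ≤ (1/2:ℝ)^2 := by
        apply pow_le_pow_left₀ (norm_nonneg _) hg1norm
      rw [Complex.sq_norm, Complex.normSq_apply] at h13
      nlinarith [h13]
    rw [hg1re] at h12
    nlinarith [sq_nonneg ((g 1).im)]
  have hwim : w.im = 0 := by
    have h14 : (g 1).im = (GPaux.cs β E 1) * w.im := by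
      rw [hgdef]
      simp [pow_one, Complex.mul_im]
    have h15 : GPaux.cs β E 1 ≠ 0 := by
      intro h16
      have : (g 1).re = 0 := by
        rw [hgdef]; simp [h16]
      rw [hg1re] at this; norm_num at this
    rw [h14] at hg1im
    exact (mul_eq_zero.mp hg1im).resolve_left (by exact_mod_cast h15)
  have hzim : z.im = 0 := by
    have : z = w⁻¹ := by rw [hwdef, inv_inv]
    rw [this, Complex.inv_im, hwim]
    simp
  have hzre : z = ((z.re : ℝ) : ℂ) := by
    apply Complex.ext
    · simp
    · simp [hzim]
  have hzre2 : |z.re| = 2 := by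
    have h17 : ‖z‖ = 2 := by
      have h17a : ‖z‖⁻¹ = 1/2 := by rw [← norm_inv, ← hwdef]; exact hweq
      have h17b := congrArg Inv.inv h17a
      rw [inv_inv] at h17b
      rw [h17b]; norm_num
    rw [hzre] at h17
    rwa [Complex.norm_real, Real.norm_eq_abs] at h17
  rcases (abs_eq (by norm_num : (0:ℝ) ≤ 2)).mp hzre2 with h19 | h19
  · have hzq : z = (((2:ℚ) : ℚ) : ℂ) := by
      rw [hzre, h19]; norm_num
    exact hz.1 (GPaux.rat_root_eq β hint hz.2 2 hzq)
  · have hzq : z = (((-2:ℚ) : ℚ) : ℂ) := by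
      rw [hzre, h19]; norm_num
    exact hz.1 (GPaux.rat_root_eq β hint hz.2 (-2) hzq)
end

section
/- For every θ ∈ (0, π) and every sequence of real numbers (a_n)_{n≥1} with a_n ∈ [−1, 1], one has 1 + Σ_{n=1}^∞ a_n (e^{iθ}/2)^n ≠ 0. In other words, no function in the class 𝓕 has a zero of modulus exactly 1/2 with argument in (0, π). -/
open Finset

/-- For every `θ ∈ (0, π)` and every sequence `a_n ∈ [-1,1]`,
`1 + Σ_{n=1}^∞ a_n (e^{iθ}/2)^n ≠ 0`: no function in `𝓕` has a zero of modulus exactly `1/2`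
with argument in `(0, π)`. -/
theorem stmt7 (θ : ℝ) (hθ : θ ∈ Set.Ioo 0 Real.pi)
    (a : ℕ → ℝ) (ha : ∀ n : ℕ, 1 ≤ n → a n ∈ Set.Icc (-1 : ℝ) 1) :
    1 + ∑' n : ℕ, (a (n + 1) : ℂ) * (Complex.exp (θ * Complex.I) / 2) ^ (n + 1) ≠ 0 := by
  obtain ⟨hθ0, hθπ⟩ := hθ
  set w : ℂ := Complex.exp (θ * Complex.I) / 2 with hw
  have hwnorm : ‖w‖ = 1/2 := by
    rw [hw, norm_div]
    simp [Complex.norm_exp_ofReal_mul_I]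
  have hbound : ∀ n : ℕ, 1 ≤ n → ‖(a n : ℂ) * w ^ n‖ ≤ (1/2 : ℝ)^n := by
    intro n hn
    rw [norm_mul, norm_pow, hwnorm, Complex.norm_real]
    have h1 := ha n hn
    have h2 : |a n| ≤ 1 := abs_le.2 ⟨h1.1, h1.2⟩
    calc |a n| * (1/2:ℝ)^n ≤ 1 * (1/2:ℝ)^n :=
          mul_le_mul_of_nonneg_right h2 (by positivity)
      _ = (1/2:ℝ)^n := one_mul _
  have hgeo : Summable (fun n : ℕ => (1/2 : ℝ)^n) :=
    summable_geometric_of_lt_one (by norm_num) (by norm_num)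
  have hgeo2 : Summable (fun n : ℕ => (1/2 : ℝ)^(n+2)) := (summable_nat_add_iff 2).2 hgeo
  have hsum : Summable (fun n : ℕ => (a (n+1) : ℂ) * w ^ (n+1)) := by
    apply Summable.of_norm
    apply Summable.of_nonneg_of_le (fun n => norm_nonneg _) (fun n => hbound (n+1) (by omega))
    exact (summable_nat_add_iff 1).2 hgeo
  have hsum2 : Summable (fun n : ℕ => (a (n+2) : ℂ) * w ^ (n+2)) := by
    apply Summable.of_norm
    exact Summable.of_nonneg_of_le (fun n => norm_nonneg _)
      (fun n => hbound (n+2) (by omega)) hgeo2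
  intro h0
  have hsplit : ∑' n : ℕ, (a (n+1):ℂ) * w^(n+1)
      = (a 1:ℂ)*w^(0+1) + ∑' n : ℕ, (a (n+2):ℂ)*w^(n+2) := Summable.tsum_eq_zero_add hsum
  -- tail bound
  have htail : ‖∑' n : ℕ, (a (n+2):ℂ)*w^(n+2)‖ ≤ 1/2 := by
    calc ‖∑' n : ℕ, (a (n+2):ℂ)*w^(n+2)‖
        ≤ ∑' n : ℕ, ‖(a (n+2):ℂ)*w^(n+2)‖ := norm_tsum_le_tsum_norm hsum2.norm
      _ ≤ ∑' n : ℕ, (1/2:ℝ)^(n+2) :=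
          Summable.tsum_le_tsum (fun n => hbound (n+2) (by omega)) hsum2.norm hgeo2
      _ = 1/2 := by
          have : ∀ n : ℕ, (1/2:ℝ)^(n+2) = (1/2:ℝ)^n * (1/4) := by
            intro n; rw [pow_add]; norm_num
          rw [tsum_congr this, tsum_mul_right, tsum_geometric_of_lt_one (by norm_num) (by norm_num)]
          norm_num
  -- head bound
  have hhead : ‖1 + (a 1:ℂ)*w^(0+1)‖ ≤ 1/2 := by
    have : 1 + (a 1:ℂ)*w^(0+1) = -(∑' n : ℕ, (a (n+2):ℂ)*w^(n+2)) := by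
      have := h0
      rw [hsplit] at this
      linear_combination this
    rw [this, norm_neg]
    exact htail
  -- key inequality
  have hc1 : Real.cos θ < 1 := by
    have := Real.cos_lt_cos_of_nonneg_of_le_pi le_rfl (le_of_lt hθπ) hθ0
    simpa using this
  have hc2 : -1 < Real.cos θ := by
    have := Real.cos_lt_cos_of_nonneg_of_le_pi (le_of_lt hθ0) le_rfl hθπ
    simpa using this
  have ha1 := ha 1 le_rfl
  have hre : ((1 : ℂ) + (a 1:ℂ)*w^(0+1)).re = 1 + a 1 * Real.cos θ / 2 := by
    simp [hw, Complex.exp_ofReal_mul_I_re, Complex.exp_ofReal_mul_I_im, Complex.div_re,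
      Complex.normSq_apply]
    ring
  have him : ((1 : ℂ) + (a 1:ℂ)*w^(0+1)).im = a 1 * Real.sin θ / 2 := by
    simp [hw, Complex.exp_ofReal_mul_I_re, Complex.exp_ofReal_mul_I_im, Complex.div_im,
      Complex.normSq_apply]
    ring
  have hsq : ‖(1 : ℂ) + (a 1:ℂ)*w^(0+1)‖^2 = 1 + a 1 * Real.cos θ + (a 1)^2/4 := by
    rw [Complex.sq_norm, Complex.normSq_apply, hre, him]
    have hpy : Real.sin θ ^ 2 + Real.cos θ ^ 2 = 1 := Real.sin_sq_add_cos_sq θ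
    nlinarith [hpy]
  have hkey : (1:ℝ)/4 < ‖(1 : ℂ) + (a 1:ℂ)*w^(0+1)‖^2 := by
    rw [hsq]
    nlinarith [sq_nonneg (a 1 + Real.cos θ), mul_nonneg (sub_nonneg.2 ha1.2) (sub_nonneg.2 hc1.le),
      mul_nonneg (add_nonneg (by linarith [ha1.1] : (0:ℝ) ≤ a 1 + 1) le_rfl) le_rfl,
      mul_nonneg (by linarith [ha1.1] : (0:ℝ) ≤ a 1 + 1) (by linarith : (0:ℝ) ≤ Real.cos θ + 1),
      mul_pos (by linarith : (0:ℝ) < 1 - Real.cos θ) (by linarith : (0:ℝ) < 1 + Real.cos θ)]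
  have : ‖(1 : ℂ) + (a 1:ℂ)*w^(0+1)‖^2 ≤ 1/4 := by
    have h := hhead
    nlinarith [norm_nonneg ((1 : ℂ) + (a 1:ℂ)*w^(0+1))]
  linarith
end

section
/- There exists ε > 0 such that every non-real λ ∈ ℂ with |λ| < 1 satisfying 1 + Σ_{j=1}^∞ a_j λ^j = 0 for some sequence of real coefficients a_j ∈ [−1, 1] has |λ| ≥ 1/2 + ε. Equivalently, the minimal modulus λ_φ of a zero of a function in 𝓕 with argument φ is bounded uniformly away from 1/2 for φ ∈ (0, π), so sup{λ_φ^{−1} : φ ∈ (0, π)} < 2. -/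
open Finset

/-- The zero-property of the class 𝓕 at the point `l`. -/
def GoodPt (l : ℂ) : Prop :=
  ∃ a : ℕ → ℝ, (∀ j : ℕ, a (j + 1) ∈ Set.Icc (-1 : ℝ) 1) ∧
    1 + ∑' j : ℕ, (a (j + 1) : ℂ) * l ^ (j + 1) = 0

lemma goodPt_conj {l : ℂ} (h : GoodPt l) : GoodPt ((starRingEnd ℂ) l) := by
  obtain ⟨a, ha, heq⟩ := h
  refine ⟨a, ha, ?_⟩
  have h1 : (starRingEnd ℂ) (∑' j : ℕ, (a (j + 1) : ℂ) * l ^ (j + 1))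
      = ∑' j : ℕ, (a (j + 1) : ℂ) * ((starRingEnd ℂ) l) ^ (j + 1) := by
    calc (starRingEnd ℂ) (∑' j : ℕ, (a (j + 1) : ℂ) * l ^ (j + 1))
        = star (∑' j : ℕ, (a (j + 1) : ℂ) * l ^ (j + 1)) := rfl
      _ = ∑' j : ℕ, star ((a (j + 1) : ℂ) * l ^ (j + 1)) := tsum_star
      _ = ∑' j : ℕ, (a (j + 1) : ℂ) * ((starRingEnd ℂ) l) ^ (j + 1) := by
          congr 1; funext j
          simp only [star_mul', ← Complex.star_def, star_pow]
          rw [Complex.star_def, Complex.conj_ofReal]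
  have h2 := congrArg (starRingEnd ℂ) heq
  rw [map_add, map_one, map_zero, h1] at h2
  exact h2

lemma goodPt_neg {l : ℂ} (h : GoodPt l) : GoodPt (-l) := by
  obtain ⟨a, ha, heq⟩ := h
  refine ⟨fun j => (-1) ^ j * a j, fun j => ?_, ?_⟩
  · have := ha j
    rcases Set.mem_Icc.1 this with ⟨h1, h2⟩
    rcases Nat.even_or_odd (j + 1) with he | ho
    · simp [he.neg_one_pow, Set.mem_Icc]; constructor <;> linarith
    · simp [ho.neg_one_pow, Set.mem_Icc]; constructor <;> linarith
  · have hfun : ∀ j : ℕ, (((-1 : ℝ) ^ (j + 1) * a (j + 1) : ℝ) : ℂ) * (-l) ^ (j + 1)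
        = (a (j + 1) : ℂ) * l ^ (j + 1) := by
      intro j
      have h2 : ((-1 : ℂ) ^ (j + 1)) * ((-1 : ℂ) ^ (j + 1)) = 1 := by
        rw [← pow_add]
        exact Even.neg_one_pow ⟨j + 1, by ring⟩
      push_cast
      rw [neg_pow l]
      linear_combination (a (j + 1) : ℂ) * l ^ (j + 1) * h2
    rw [show (fun j : ℕ => (((-1 : ℝ) ^ (j + 1) * a (j + 1) : ℝ) : ℂ) * (-l) ^ (j + 1))
        = fun j : ℕ => (a (j + 1) : ℂ) * l ^ (j + 1) from funext hfun]
    exact heq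

set_option maxHeartbeats 1000000 in
lemma corelem (l : ℂ) (hIm : 0 < l.im) (hRe : 0 ≤ l.re) (hr : ‖l‖ < 1 / 2 + 1e-10)
    (a : ℕ → ℝ) (ha : ∀ j : ℕ, a (j + 1) ∈ Set.Icc (-1 : ℝ) 1)
    (heq : 1 + ∑' j : ℕ, (a (j + 1) : ℂ) * l ^ (j + 1) = 0) : False := by
  set r : ℝ := ‖l‖ with hrdef
  have hr0 : 0 ≤ r := norm_nonneg l
  have hr1 : r < 1 := lt_of_lt_of_le hr (by norm_num)
  have hr6 : r ≤ 0.6 := le_of_lt (lt_of_lt_of_le hr (by norm_num))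
  have haj : ∀ j : ℕ, |a (j + 1)| ≤ 1 := fun j => abs_le.2 ⟨(ha j).1, (ha j).2⟩
  -- norms of terms
  have hnorm_t : ∀ j : ℕ, ‖(a (j + 1) : ℂ) * l ^ (j + 1)‖ = |a (j + 1)| * r ^ (j + 1) := by
    intro j
    rw [norm_mul, norm_pow, Complex.norm_real, Real.norm_eq_abs]
  -- summability
  have hgeosum : Summable (fun j : ℕ => r ^ (j + 1)) := by
    have := (summable_geometric_of_lt_one hr0 hr1).mul_right r
    simpa [pow_succ] using this
  have habs_nonneg : ∀ j : ℕ, 0 ≤ |a (j + 1)| * r ^ (j + 1) := fun j => by positivity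
  have hsummable_abs : Summable (fun j : ℕ => |a (j + 1)| * r ^ (j + 1)) :=
    Summable.of_nonneg_of_le habs_nonneg
      (fun j => mul_le_of_le_one_left (by positivity) (haj j)) hgeosum
  have hts : Summable (fun j : ℕ => (a (j + 1) : ℂ) * l ^ (j + 1)) := by
    apply Summable.of_norm
    simpa [hnorm_t] using hsummable_abs
  have hS : ∑' j : ℕ, (a (j + 1) : ℂ) * l ^ (j + 1) = -1 :=
    eq_neg_of_add_eq_zero_right heq
  -- real and imaginary parts
  set u : ℕ → ℝ := fun j => a (j + 1) * (l ^ (j + 1)).re with hudef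
  set v : ℕ → ℝ := fun j => a (j + 1) * (l ^ (j + 1)).im with hvdef
  have htre : ∀ j : ℕ, ((a (j + 1) : ℂ) * l ^ (j + 1)).re = u j := by
    intro j; simp [hudef, Complex.re_ofReal_mul]
  have htim : ∀ j : ℕ, ((a (j + 1) : ℂ) * l ^ (j + 1)).im = v j := by
    intro j; simp [hvdef, Complex.im_ofReal_mul]
  have hnormpow : ∀ j : ℕ, ‖l ^ (j + 1)‖ = r ^ (j + 1) := fun j => norm_pow l (j + 1)
  have hUb' : ∀ j : ℕ, |u j| ≤ |a (j + 1)| * r ^ (j + 1) := by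
    intro j
    rw [hudef, abs_mul]
    apply mul_le_mul_of_nonneg_left ?_ (abs_nonneg _)
    rw [← hnormpow j]
    exact Complex.abs_re_le_norm _
  have hUb : ∀ j : ℕ, |u j| ≤ r ^ (j + 1) := by
    intro j
    refine (hUb' j).trans ?_
    exact mul_le_of_le_one_left (by positivity) (haj j)
  have hVb : ∀ j : ℕ, |v j| ≤ r ^ (j + 1) := by
    intro j
    rw [hvdef, abs_mul]
    calc |a (j + 1)| * |(l ^ (j + 1)).im| ≤ 1 * ‖l ^ (j + 1)‖ := by
          apply mul_le_mul (haj j) ?_ (abs_nonneg _) zero_le_one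
          exact Complex.abs_im_le_norm _
      _ = r ^ (j + 1) := by rw [one_mul, hnormpow]
  have hUsum : Summable u :=
    Summable.of_norm_bounded hgeosum (fun j => by rw [Real.norm_eq_abs]; exact hUb j)
  have hVsum : Summable v :=
    Summable.of_norm_bounded hgeosum (fun j => by rw [Real.norm_eq_abs]; exact hVb j)
  have hU : ∑' j : ℕ, u j = -1 := by
    have := Complex.re_tsum hts
    rw [hS] at this
    simp only [htre, Complex.neg_re, Complex.one_re] at this
    exact this.symm
  have hV : ∑' j : ℕ, v j = 0 := by
    have := Complex.im_tsum hts
    rw [hS] at this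
    simp only [htim, Complex.neg_im, Complex.one_im, neg_zero] at this
    exact this.symm
  -- geometric sum value
  have hgeo_tsum : ∑' j : ℕ, r ^ (j + 1) = r / (1 - r) := by
    have h1 : (fun j : ℕ => r ^ (j + 1)) = fun j : ℕ => r ^ j * r := by
      funext j; rw [pow_succ]
    rw [h1, tsum_mul_right, tsum_geometric_of_lt_one hr0 hr1, inv_mul_eq_div]
  have hAbsGe : 1 ≤ ∑' j : ℕ, |a (j + 1)| * r ^ (j + 1) := by
    have hsumnorm : Summable (fun j : ℕ => ‖(a (j + 1) : ℂ) * l ^ (j + 1)‖) := by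
      simpa [hnorm_t] using hsummable_abs
    have h1 := norm_tsum_le_tsum_norm hsumnorm
    rw [hS] at h1
    simp only [hnorm_t] at h1
    simpa using h1
  have hAbsLe : ∑' j : ℕ, |a (j + 1)| * r ^ (j + 1) ≤ r / (1 - r) := by
    rw [← hgeo_tsum]
    exact Summable.tsum_le_tsum (fun j => mul_le_of_le_one_left (by positivity) (haj j))
      hsummable_abs hgeosum
  have h1r : 0 < 1 - r := by linarith
  have hrhalf : 1 / 2 ≤ r := by
    have h2 : 1 ≤ r / (1 - r) := le_trans hAbsGe hAbsLe
    rw [le_div_iff₀ h1r] at h2; linarith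
  have hslack : r / (1 - r) ≤ 1 + 5e-10 := by
    rw [div_le_iff₀ h1r]; nlinarith
  -- pointwise smallness facts
  have key1 : ∀ j : ℕ, (1 - |a (j + 1)|) * r ^ (j + 1) ≤ 5e-10 := by
    intro j
    have hsd : Summable (fun j : ℕ => (1 - |a (j + 1)|) * r ^ (j + 1)) := by
      have := hgeosum.sub hsummable_abs
      simpa [sub_mul] using this
    have htd : ∑' j : ℕ, (1 - |a (j + 1)|) * r ^ (j + 1) ≤ 5e-10 := by
      have heq2 : ∑' j : ℕ, (1 - |a (j + 1)|) * r ^ (j + 1)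
          = (∑' j : ℕ, r ^ (j + 1)) - ∑' j : ℕ, |a (j + 1)| * r ^ (j + 1) := by
        rw [← Summable.tsum_sub hgeosum hsummable_abs]
        congr 1; funext j; ring
      rw [heq2, hgeo_tsum]; linarith
    refine le_trans (Summable.le_tsum hsd j ?_) htd
    intro k _
    exact mul_nonneg (by linarith [haj k]) (by positivity)
  have key2 : ∀ j : ℕ, |a (j + 1)| * r ^ (j + 1) + u j ≤ 5e-10 := by
    intro j
    have hsd : Summable (fun j : ℕ => |a (j + 1)| * r ^ (j + 1) + u j) :=
      hsummable_abs.add hUsum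
    have htd : ∑' j : ℕ, (|a (j + 1)| * r ^ (j + 1) + u j) ≤ 5e-10 := by
      rw [Summable.tsum_add hsummable_abs hUsum, hU]; linarith
    refine le_trans (Summable.le_tsum hsd j ?_) htd
    intro k _
    have h2 := hUb' k
    linarith [neg_abs_le (u k)]
  have nlow : ∀ j : ℕ, r ^ (j + 1) - 5e-10 ≤ |a (j + 1)| * r ^ (j + 1) := by
    intro j
    have := key1 j
    rw [sub_mul, one_mul] at this
    linarith
  -- the first coefficient
  have k2 : |a 1| * r + u 0 ≤ 5e-10 := by have := key2 0; simpa using this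
  have k1 : r - 5e-10 ≤ |a 1| * r := by have := nlow 0; simpa using this
  have hu0 : u 0 = a 1 * l.re := by simp [hudef]
  have hrele : l.re ≤ r := by
    rw [hrdef]; exact Complex.re_le_norm l
  have ha1neg : a 1 < 0 := by
    by_contra hc
    push_neg at hc
    have h1 : 0 ≤ a 1 * l.re := mul_nonneg hc hRe
    rw [hu0] at k2
    linarith
  have hab1 : |a 1| = -a 1 := abs_of_neg ha1neg
  have hab1' : 1 - |a 1| ≤ 1e-9 := by
    have h0 : (0 : ℝ) ≤ 1 - |a 1| := by linarith [haj 0]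
    have h9 : (0 : ℝ) ≤ r - 1 / 2 := by linarith
    have k1' := key1 0
    simp only [zero_add, pow_one] at k1'
    nlinarith [mul_nonneg h0 h9]
  have ha1le : a 1 ≤ -(1 - 1e-9) := by rw [hab1] at hab1'; linarith
  have hdre0 : 0 ≤ r - l.re := by linarith
  have hdre : r - l.re ≤ 1e-9 := by
    rw [hu0, hab1] at k2
    nlinarith [mul_nonneg (show (0 : ℝ) ≤ -a 1 - 0.9 by linarith) hdre0]
  -- distance from l to r
  have hr2 : r ^ 2 = l.re ^ 2 + l.im ^ 2 := by
    rw [hrdef, Complex.sq_norm, Complex.normSq_apply]; ring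
  have hd2 : ‖l - (r : ℂ)‖ ^ 2 = 2 * r * (r - l.re) := by
    rw [Complex.sq_norm, Complex.normSq_apply]
    simp only [Complex.sub_re, Complex.sub_im, Complex.ofReal_re, Complex.ofReal_im, sub_zero]
    linear_combination -hr2
  have hdist : ‖l - (r : ℂ)‖ ≤ 4e-5 := by
    have hA : ‖l - (r : ℂ)‖ ^ 2 ≤ 1.6e-9 := by
      rw [hd2]
      nlinarith [mul_le_mul hr6 hdre hdre0 (by norm_num : (0:ℝ) ≤ 0.6)]
    nlinarith [hA, sq_nonneg (‖l - (r : ℂ)‖ - 4e-5)]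
  -- powers stay close to real powers
  have hpow : ∀ j : ℕ, ‖l ^ j - (r : ℂ) ^ j‖ ≤ j * 4e-5 := by
    intro j
    induction j with
    | zero => simp
    | succ n ih =>
      have hfact : l ^ (n + 1) - (r : ℂ) ^ (n + 1)
          = l * (l ^ n - (r : ℂ) ^ n) + (l - r) * (r : ℂ) ^ n := by ring
      have hb1 : ‖l * (l ^ n - (r : ℂ) ^ n)‖ ≤ 1 * (n * 4e-5) := by
        rw [norm_mul]
        exact mul_le_mul hr1.le ih (norm_nonneg _) zero_le_one
      have hb2 : ‖(l - r) * (r : ℂ) ^ n‖ ≤ 4e-5 * 1 := by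
        rw [norm_mul, norm_pow, Complex.norm_real, Real.norm_eq_abs, _root_.abs_of_nonneg hr0]
        exact mul_le_mul hdist (pow_le_one₀ hr0 hr1.le) (by positivity) (by norm_num)
      calc ‖l ^ (n + 1) - (r : ℂ) ^ (n + 1)‖
          ≤ ‖l * (l ^ n - (r : ℂ) ^ n)‖ + ‖(l - r) * (r : ℂ) ^ n‖ := by
            rw [hfact]; exact norm_add_le _ _
        _ ≤ 1 * (n * 4e-5) + 4e-5 * 1 := add_le_add hb1 hb2
        _ = (n + 1 : ℕ) * 4e-5 := by push_cast; ring
  have hrepow : ∀ j : ℕ, r ^ j - j * 4e-5 ≤ (l ^ j).re := by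
    intro j
    have hre : (l ^ j - (r : ℂ) ^ j).re = (l ^ j).re - r ^ j := by
      simp [Complex.sub_re, ← Complex.ofReal_pow]
    have h1 : |(l ^ j).re - r ^ j| ≤ ‖l ^ j - (r : ℂ) ^ j‖ := by
      rw [← hre]; exact Complex.abs_re_le_norm _
    have h2 := (abs_le.1 (h1.trans (hpow j))).1
    linarith
  have hrlow : ∀ j : ℕ, j ≤ 10 → (1 : ℝ) / 1024 ≤ r ^ j := by
    intro j hj
    calc (1 : ℝ) / 1024 = (1 / 2) ^ 10 := by norm_num
      _ ≤ (1 / 2 : ℝ) ^ j := pow_le_pow_of_le_one (by norm_num) (by norm_num) hj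
      _ ≤ r ^ j := pow_le_pow_left₀ (by norm_num) hrhalf j
  have hrppos : ∀ j : ℕ, j ≤ 10 → 0 ≤ (l ^ j).re := by
    intro j hj
    have h1 := hrepow j
    have h2 := hrlow j hj
    have h3 : (j : ℝ) ≤ 10 := by exact_mod_cast hj
    nlinarith
  have himnn : ∀ j : ℕ, j ≤ 10 → 0 ≤ (l ^ j).im := by
    intro j
    induction j with
    | zero => intro _; simp
    | succ n ih =>
      intro hn
      rw [pow_succ' l n, Complex.mul_im]
      have h1 := ih (by omega)
      have h2 := hrppos n (by omega)
      have h3 : 0 ≤ l.re * (l ^ n).im := mul_nonneg hRe h1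
      have h4 : 0 ≤ l.im * (l ^ n).re := mul_nonneg hIm.le h2
      linarith
  have himub : ∀ j : ℕ, |(l ^ (j + 1)).im| ≤ (j + 1) * r ^ j * l.im := by
    intro j
    induction j with
    | zero => simp [abs_of_pos hIm]
    | succ n ih =>
      have h1 : l ^ (n + 1 + 1) = l * l ^ (n + 1) := pow_succ' l (n + 1)
      rw [h1, Complex.mul_im]
      have hren : |(l ^ (n + 1)).re| ≤ r ^ (n + 1) := by
        rw [← hnormpow n]; exact Complex.abs_re_le_norm _
      have hlre : |l.re| ≤ r := by
        rw [hrdef]; exact Complex.abs_re_le_norm _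
      have t1 : |l.re * (l ^ (n + 1)).im| ≤ r * ((n + 1) * r ^ n * l.im) := by
        rw [abs_mul]
        exact mul_le_mul hlre ih (abs_nonneg _) hr0
      have t2 : |l.im * (l ^ (n + 1)).re| ≤ l.im * r ^ (n + 1) := by
        rw [abs_mul, abs_of_pos hIm]
        exact mul_le_mul_of_nonneg_left hren hIm.le
      calc |l.re * (l ^ (n + 1)).im + l.im * (l ^ (n + 1)).re|
          ≤ |l.re * (l ^ (n + 1)).im| + |l.im * (l ^ (n + 1)).re| := abs_add_le _ _
        _ ≤ r * ((n + 1) * r ^ n * l.im) + l.im * r ^ (n + 1) := add_le_add t1 t2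
        _ = ((n : ℕ) + 1 + 1 : ℝ) * r ^ (n + 1) * l.im := by ring
        _ = ((n + 1 : ℕ) + 1 : ℝ) * r ^ (n + 1) * l.im := by push_cast; ring
  have haneg : ∀ j : ℕ, j ≤ 9 → a (j + 1) ≤ 0 := by
    intro j hj
    by_contra hc
    push_neg at hc
    have h1 : 0 ≤ u j := mul_nonneg hc.le (hrppos (j + 1) (by omega))
    have h2 := key2 j
    have h3 := nlow j
    have h4 := hrlow (j + 1) (by omega)
    linarith
  -- split the imaginary-part sum
  have hsplit : (∑ j ∈ range 10, v j) + ∑' j : ℕ, v (j + 10) = 0 := by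
    rw [Summable.sum_add_tsum_nat_add 10 hVsum, hV]
  have hhead : ∑ j ∈ range 10, v j ≤ -(1 / 2) * l.im := by
    have h0 : v 0 = a 1 * l.im := by simp [hvdef]
    have hrest : ∑ j ∈ range 9, v (j + 1) ≤ 0 := by
      apply Finset.sum_nonpos
      intro j hj
      simp only [Finset.mem_range] at hj
      have ha' : a (j + 1 + 1) ≤ 0 := haneg (j + 1) (by omega)
      have him' : 0 ≤ (l ^ (j + 1 + 1)).im := himnn (j + 1 + 1) (by omega)
      exact mul_nonpos_of_nonpos_of_nonneg ha' him'
    have hs : ∑ j ∈ range 10, v j = (∑ j ∈ range 9, v (j + 1)) + v 0 :=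
      Finset.sum_range_succ' v 9
    have hv0 : v 0 ≤ -(1 / 2) * l.im := by
      rw [h0]
      nlinarith [hIm, ha1le]
    rw [hs]
    linarith
  have hVtail : Summable (fun j : ℕ => v (j + 10)) := (summable_nat_add_iff 10).2 hVsum
  have hgs : HasSum (fun j : ℕ => ((j : ℝ) + 11) * 0.6 ^ (j + 10))
      ((0.6 : ℝ) ^ 10 * (0.6 / (1 - 0.6) ^ 2) + (11 * 0.6 ^ 10) * (1 - 0.6)⁻¹) := by
    have h1 : HasSum (fun j : ℕ => (j : ℝ) * 0.6 ^ j) (0.6 / (1 - 0.6) ^ 2) :=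
      hasSum_coe_mul_geometric_of_norm_lt_one (by rw [Real.norm_eq_abs, abs_lt]; constructor <;> norm_num)
    have h2 : HasSum (fun j : ℕ => (0.6 : ℝ) ^ j) ((1 - 0.6)⁻¹) :=
      hasSum_geometric_of_lt_one (by norm_num) (by norm_num)
    have h3 := (h1.mul_left ((0.6 : ℝ) ^ 10)).add (h2.mul_left (11 * (0.6 : ℝ) ^ 10))
    convert h3 using 1
    · rfl
    funext j
    rw [pow_add]
    ring
  have htailb : ∀ j : ℕ, |v (j + 10)| ≤ (((j : ℝ) + 11) * 0.6 ^ (j + 10)) * l.im := by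
    intro j
    have h1 : |v (j + 10)| ≤ |(l ^ (j + 10 + 1)).im| := by
      rw [hvdef]
      simp only []
      rw [abs_mul]
      exact mul_le_of_le_one_left (abs_nonneg _) (haj (j + 10))
    have h2 := himub (j + 10)
    have h3 : r ^ (j + 10) ≤ (0.6 : ℝ) ^ (j + 10) := pow_le_pow_left₀ hr0 hr6 _
    have h4 : ((j + 10 : ℕ) + 1 : ℝ) * r ^ (j + 10) * l.im
        ≤ (((j : ℝ) + 11) * 0.6 ^ (j + 10)) * l.im := by
      apply mul_le_mul_of_nonneg_right ?_ hIm.le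
      have : ((j + 10 : ℕ) + 1 : ℝ) = (j : ℝ) + 11 := by push_cast; ring
      rw [this]
      exact mul_le_mul_of_nonneg_left h3 (by positivity)
    calc |v (j + 10)| ≤ |(l ^ (j + 10 + 1)).im| := h1
      _ ≤ ((j + 10 : ℕ) + 1 : ℝ) * r ^ (j + 10) * l.im := h2
      _ ≤ (((j : ℝ) + 11) * 0.6 ^ (j + 10)) * l.im := h4
  have hgsum : Summable (fun j : ℕ => (((j : ℝ) + 11) * 0.6 ^ (j + 10)) * l.im) :=
    hgs.summable.mul_right l.im
  have hsummtail : Summable (fun j : ℕ => |v (j + 10)|) :=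
    Summable.of_nonneg_of_le (fun j => abs_nonneg _) htailb hgsum
  have htail : |∑' j : ℕ, v (j + 10)| ≤ 0.19 * l.im := by
    have hn1 : |∑' j : ℕ, v (j + 10)| ≤ ∑' j : ℕ, |v (j + 10)| := by
      have := norm_tsum_le_tsum_norm (f := fun j : ℕ => v (j + 10))
        (by simpa [Real.norm_eq_abs] using hsummtail)
      simpa [Real.norm_eq_abs] using this
    have hn2 : ∑' j : ℕ, |v (j + 10)| ≤ ∑' j : ℕ, (((j : ℝ) + 11) * 0.6 ^ (j + 10)) * l.im :=
      Summable.tsum_le_tsum htailb hsummtail hgsum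
    have hn3 : ∑' j : ℕ, (((j : ℝ) + 11) * 0.6 ^ (j + 10)) * l.im
        = ((0.6 : ℝ) ^ 10 * (0.6 / (1 - 0.6) ^ 2) + (11 * 0.6 ^ 10) * (1 - 0.6)⁻¹) * l.im := by
      rw [tsum_mul_right, hgs.tsum_eq]
    have hc : ((0.6 : ℝ) ^ 10 * (0.6 / (1 - 0.6) ^ 2) + (11 * 0.6 ^ 10) * (1 - 0.6)⁻¹) ≤ 0.19 := by
      norm_num
    have hn4 : ((0.6 : ℝ) ^ 10 * (0.6 / (1 - 0.6) ^ 2) + (11 * 0.6 ^ 10) * (1 - 0.6)⁻¹) * l.im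
        ≤ 0.19 * l.im := mul_le_mul_of_nonneg_right hc hIm.le
    linarith [hn1, hn2, hn3 ▸ hn2]
  have hfin := (abs_le.1 htail).2
  linarith [hhead, hfin, hIm, hsplit]

/-- There is `ε > 0` such that every non-real zero `λ` (in the open unit disk) of a
power series `1 + Σ_{j≥1} a_j w^j` with coefficients `a_j ∈ [-1,1]` satisfies `|λ| ≥ 1/2 + ε`. -/
theorem stmt8 :
    ∃ ε > (0 : ℝ), ∀ l : ℂ, l.im ≠ 0 → ‖l‖ < 1 →
      (∃ a : ℕ → ℝ, (∀ j : ℕ, a (j + 1) ∈ Set.Icc (-1 : ℝ) 1) ∧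
        1 + ∑' j : ℕ, (a (j + 1) : ℂ) * l ^ (j + 1) = 0) →
      1 / 2 + ε ≤ ‖l‖ := by
  refine ⟨1e-10, by norm_num, ?_⟩
  intro l him _ hG
  by_contra hcon
  push_neg at hcon
  obtain ⟨l', h1, h2, h3, h4⟩ :
      ∃ l' : ℂ, 0 < l'.im ∧ 0 ≤ l'.re ∧ ‖l'‖ = ‖l‖ ∧ GoodPt l' := by
    rcases lt_or_gt_of_ne him with hlt | hgt
    · rcases le_or_gt 0 l.re with hre | hre
      · refine ⟨(starRingEnd ℂ) l, ?_, ?_, ?_, goodPt_conj hG⟩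
        · simpa using neg_pos.2 hlt
        · simpa using hre
        · rw [Complex.norm_conj]
      · exact ⟨-l, by simpa using neg_pos.2 hlt, by simpa using hre.le, norm_neg l, goodPt_neg hG⟩
    · rcases le_or_gt 0 l.re with hre | hre
      · exact ⟨l, hgt, hre, rfl, hG⟩
      · refine ⟨-((starRingEnd ℂ) l), ?_, ?_, ?_, goodPt_neg (goodPt_conj hG)⟩
        · simpa using hgt
        · simpa using hre.le
        · rw [norm_neg, Complex.norm_conj]
  obtain ⟨a, ha, heq⟩ := h4
  exact corelem l' h1 h2 (by rw [h3]; exact hcon) a ha heq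
end

section
/- Under the hypotheses (H1) and (H3) on the sequence (s(j), a(j)), for every x ∈ [It(1), It(1)+1] and every j ∈ {1, …, n−1}, one has |R_j(x)| < x^{−(j−1)}. -/
open Finset

/-- Under hypotheses (H1) and (H3), for `x ∈ [It(1), It(1)+1]` and
`1 ≤ j ≤ n−1`, one has `|R_j(x)| < x^{−(j−1)}`. -/
theorem stmt9 (n : ℕ) (hn : 2 ≤ n) (s : ℕ → ℤ) (a : ℕ → ℕ)
    (hs1 : s 1 = 1) (hs : ∀ j : ℕ, 1 ≤ j → j ≤ n → s j = 1 ∨ s j = -1) (han : a n ≠ 0)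
    (H1 : ∀ j : ℕ, 2 ≤ j → j ≤ n → a j < ItSeq n s a 1)
    (H3 : ∀ j : ℕ, 1 ≤ j → j ≤ n - 1 → a j = 0 → s (j + 1) = s j) :
    ∀ x ∈ Set.Icc (ItSeq n s a 1 : ℝ) ((ItSeq n s a 1 : ℝ) + 1),
      ∀ j : ℕ, 1 ≤ j → j ≤ n - 1 → |RSum n s a j x| < x ^ (-((j : ℤ) - 1)) := by
  intro x hx j hj1 hjn
  set A := ItSeq n s a 1 with hA
  have han1 : 1 ≤ a n := Nat.one_le_iff_ne_zero.mpr han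
  have hA2 : 2 ≤ A := by
    have := H1 n hn le_rfl
    omega
  have hxA : (A : ℝ) ≤ x := hx.1
  have hA2' : (2 : ℝ) ≤ (A : ℝ) := by exact_mod_cast hA2
  have hx1 : (1 : ℝ) < x := by linarith
  have hx0 : (0 : ℝ) < x := by linarith
  set r := x⁻¹ with hr
  have hr0 : 0 < r := inv_pos.mpr hx0
  have hr1 : r < 1 := by
    rw [hr, inv_lt_one_iff₀]; right; exact hx1
  have hjn' : j < n := by omega
  have hxr : x * r = 1 := mul_inv_cancel₀ hx0.ne'
  have hterm : ∀ i ∈ Finset.Ico j n,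
      |(s (i+1) : ℝ) * (a (i+1) : ℝ) * x ^ (-(i : ℤ))| ≤ ((A : ℝ) - 1) * r ^ i := by
    intro i hi
    simp only [Finset.mem_Ico] at hi
    have hsi : s (i+1) = 1 ∨ s (i+1) = -1 := hs (i+1) (by omega) (by omega)
    have hai : a (i+1) < A := H1 (i+1) (by omega) (by omega)
    have hxz : x ^ (-(i : ℤ)) = r ^ i := by
      rw [zpow_neg, zpow_natCast, hr, inv_pow]
    rw [hxz, abs_mul, abs_mul]
    have h1 : |(s (i+1) : ℝ)| = 1 := by rcases hsi with h | h <;> simp [h]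
    rw [h1, one_mul, abs_of_nonneg (Nat.cast_nonneg _),
      abs_of_nonneg (pow_nonneg hr0.le _)]
    have hle : (a (i+1) : ℝ) ≤ (A : ℝ) - 1 := by
      have : ((a (i+1) : ℕ) : ℝ) + 1 ≤ (A : ℝ) := by exact_mod_cast hai
      linarith
    exact mul_le_mul_of_nonneg_right hle (pow_nonneg hr0.le _)
  have hbound : |RSum n s a j x| ≤ ((A : ℝ) - 1) * ∑ i ∈ Finset.Ico j n, r ^ i := by
    rw [RSum, Finset.mul_sum]
    exact (Finset.abs_sum_le_sum_abs _ _).trans (Finset.sum_le_sum hterm)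
  have hgeo : ∑ i ∈ Finset.Ico j n, r ^ i = (r ^ j - r ^ n) / (1 - r) := by
    rw [geom_sum_Ico hr1.ne hjn'.le,
      div_eq_div_iff (by linarith : r - 1 ≠ 0) (by linarith : (1 : ℝ) - r ≠ 0)]
    ring
  have hRHS : x ^ (-((j : ℤ) - 1)) = x * r ^ j := by
    have h : -((j : ℤ) - 1) = 1 - (j : ℤ) := by ring
    rw [h, zpow_sub₀ hx0.ne', zpow_one, zpow_natCast, div_eq_mul_inv, hr, inv_pow]
  rw [hRHS]
  refine lt_of_le_of_lt hbound ?_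
  rw [hgeo, mul_div_assoc', div_lt_iff₀ (by linarith : (0 : ℝ) < 1 - r)]
  have hrn : (0 : ℝ) < r ^ n := pow_pos hr0 n
  have hrj : (0 : ℝ) < r ^ j := pow_pos hr0 j
  have hrnj : r ^ n ≤ r ^ j := pow_le_pow_of_le_one hr0.le hr1.le hjn'.le
  have hA1x : (A : ℝ) - 1 ≤ x - 1 := by linarith
  have key : ((A : ℝ) - 1) * (r ^ j - r ^ n) < (x - 1) * r ^ j := by
    have h1 : ((A : ℝ) - 1) * (r ^ j - r ^ n) ≤ (x - 1) * (r ^ j - r ^ n) :=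
      mul_le_mul_of_nonneg_right hA1x (by linarith)
    have h2 : (x - 1) * (r ^ j - r ^ n) < (x - 1) * r ^ j := by
      have := mul_pos (by linarith : (0 : ℝ) < x - 1) hrn
      nlinarith
    linarith
  have hexp : x * r ^ j * (1 - r) = (x - 1) * r ^ j := by
    have : x * r ^ j * r = r ^ j := by
      calc x * r ^ j * r = (x * r) * r ^ j := by ring
        _ = r ^ j := by rw [hxr, one_mul]
    nlinarith [this]
  rw [hexp]
  exact key
end

section
/- Under the hypotheses (H1) and (H3) on the sequence (s(j), a(j)), for every x ∈ [It(1), It(1)+1] and every j ∈ {1, …, n−1}, one has sign(R_j(x)) = s(j+1); that is, s(j+1)·R_j(x) > 0. -/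
open Finset

lemma geo_aux (x : ℝ) (hx : 0 < x) : ∀ N j : ℕ, j ≤ N →
    ∑ i ∈ Finset.Ico j N, (x - 1) * x ^ (-(i : ℤ)) = x ^ (1 - (j : ℤ)) - x ^ (1 - (N : ℤ)) := by
  have hx0 : x ≠ 0 := ne_of_gt hx
  intro N
  induction N with
  | zero => intro j hj; simp [Nat.le_zero.mp hj]
  | succ N ih =>
    intro j hj
    rcases Nat.lt_or_ge j (N + 1) with h | h
    · have hjN : j ≤ N := Nat.lt_succ_iff.mp h
      rw [Finset.sum_Ico_succ_top hjN, ih j hjN]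
      have key : x ^ (1 - (N : ℤ)) = x * x ^ (-(N : ℤ)) := by
        rw [sub_eq_add_neg, zpow_add₀ hx0, zpow_one]
      have key2 : (1 : ℤ) - ((N : ℕ) + 1 : ℕ) = -(N : ℤ) := by push_cast; ring
      rw [key2, key]
      ring
    · have : j = N + 1 := by omega
      subst this
      simp

/-- Under hypotheses (H1) and (H3), for `x ∈ [It(1), It(1)+1]` and
`1 ≤ j ≤ n−1`, one has `sign(R_j(x)) = s(j+1)`, i.e. `s(j+1)·R_j(x) > 0`. -/
theorem stmt10 (n : ℕ) (hn : 2 ≤ n) (s : ℕ → ℤ) (a : ℕ → ℕ)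
    (hs1 : s 1 = 1) (hs : ∀ j : ℕ, 1 ≤ j → j ≤ n → s j = 1 ∨ s j = -1) (han : a n ≠ 0)
    (H1 : ∀ j : ℕ, 2 ≤ j → j ≤ n → a j < ItSeq n s a 1)
    (H3 : ∀ j : ℕ, 1 ≤ j → j ≤ n - 1 → a j = 0 → s (j + 1) = s j) :
    ∀ x ∈ Set.Icc (ItSeq n s a 1 : ℝ) ((ItSeq n s a 1 : ℝ) + 1),
      ∀ j : ℕ, 1 ≤ j → j ≤ n - 1 → 0 < (s (j + 1) : ℝ) * RSum n s a j x := by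
  intro x hx
  set I1 := ItSeq n s a 1 with hI1
  have hI2 : 2 ≤ I1 := by have := H1 n (by omega) le_rfl; omega
  have hx2 : (2 : ℝ) ≤ x := le_trans (by exact_mod_cast hI2) hx.1
  have hxpos : (0 : ℝ) < x := by linarith
  have hx0 : x ≠ 0 := ne_of_gt hxpos
  have ha_bd : ∀ i : ℕ, 2 ≤ i → i ≤ n → (a i : ℝ) ≤ x - 1 := by
    intro i h2 hn'
    have h := H1 i h2 hn'
    have h' : (a i : ℝ) + 1 ≤ (I1 : ℝ) := by exact_mod_cast h
    have hxge : (I1 : ℝ) ≤ x := hx.1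
    linarith
  have hs2 : ∀ i : ℕ, 1 ≤ i → i ≤ n → (s i : ℝ) = 1 ∨ (s i : ℝ) = -1 := by
    intro i h1 h2
    rcases hs i h1 h2 with h | h <;> [left; right] <;> rw [h] <;> norm_num
  suffices H : ∀ k : ℕ, ∀ j, 1 ≤ j → j ≤ n - 1 → n - 1 - j = k →
      0 < (s (j + 1) : ℝ) * RSum n s a j x by
    intro j h1 h2; exact H _ j h1 h2 rfl
  intro k
  induction k using Nat.strong_induction_on with
  | _ k ih =>
    intro j h1 h2 hk
    by_cases ha : a (j + 1) = 0
    · -- zero digit: reduce to j+1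
      have hjn : j + 1 ≤ n - 1 := by
        rcases Nat.lt_or_ge (j + 1) n with h | h
        · omega
        · exfalso; have : j + 1 = n := by omega
          rw [this] at ha; exact han ha
      have hss : s (j + 1 + 1) = s (j + 1) := H3 (j + 1) (by omega) hjn ha
      have hrec := ih (n - 1 - (j + 1)) (by omega) (j + 1) (by omega) hjn rfl
      have hR : RSum n s a j x = RSum n s a (j + 1) x := by
        unfold RSum
        rw [Finset.sum_eq_sum_Ico_succ_bot (by omega : j < n)]
        simp [ha]
      rw [hR, ← hss]
      exact hrec
    · -- nonzero digit: direct estimate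
      have hjlt : j < n := by omega
      have hsplit : RSum n s a j x = (s (j + 1) : ℝ) * (a (j + 1) : ℝ) * x ^ (-(j : ℤ)) +
          ∑ i ∈ Finset.Ico (j + 1) n, (s (i + 1) : ℝ) * (a (i + 1) : ℝ) * x ^ (-(i : ℤ)) :=
        Finset.sum_eq_sum_Ico_succ_bot hjlt _
      have hsj : (s (j + 1) : ℝ) = 1 ∨ (s (j + 1) : ℝ) = -1 := hs2 (j + 1) (by omega) (by omega)
      have hsjsq : (s (j + 1) : ℝ) * (s (j + 1) : ℝ) = 1 := by
        rcases hsj with h | h <;> rw [h] <;> norm_num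
      have htail : |(s (j + 1) : ℝ) *
            ∑ i ∈ Finset.Ico (j + 1) n, (s (i + 1) : ℝ) * (a (i + 1) : ℝ) * x ^ (-(i : ℤ))|
          ≤ ∑ i ∈ Finset.Ico (j + 1) n, (x - 1) * x ^ (-(i : ℤ)) := by
        rw [Finset.mul_sum]
        refine le_trans (Finset.abs_sum_le_sum_abs _ _) (Finset.sum_le_sum ?_)
        intro i hi
        simp only [Finset.mem_Ico] at hi
        have hsi : (s (i + 1) : ℝ) = 1 ∨ (s (i + 1) : ℝ) = -1 := hs2 (i + 1) (by omega) (by omega)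
        have hxp : (0 : ℝ) < x ^ (-(i : ℤ)) := zpow_pos hxpos _
        have habs : |(s (j + 1) : ℝ) * ((s (i + 1) : ℝ) * (a (i + 1) : ℝ) * x ^ (-(i : ℤ)))|
            = (a (i + 1) : ℝ) * x ^ (-(i : ℤ)) := by
          rw [abs_mul, abs_mul, abs_mul, abs_of_pos hxp, Nat.abs_cast]
          rcases hsj with h | h <;> rcases hsi with h' | h' <;> rw [h, h'] <;> norm_num
        rw [habs]
        exact mul_le_mul_of_nonneg_right (ha_bd (i + 1) (by omega) (by omega)) hxp.le
      have hgeo : ∑ i ∈ Finset.Ico (j + 1) n, (x - 1) * x ^ (-(i : ℤ))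
          = x ^ (-(j : ℤ)) - x ^ (1 - (n : ℤ)) := by
        rw [geo_aux x hxpos n (j + 1) (by omega)]
        congr 2
        push_cast; ring
      have ha1 : (1 : ℝ) ≤ (a (j + 1) : ℝ) := by
        exact_mod_cast Nat.one_le_iff_ne_zero.mpr ha
      have hxj : (0 : ℝ) < x ^ (-(j : ℤ)) := zpow_pos hxpos _
      have hxn : (0 : ℝ) < x ^ (1 - (n : ℤ)) := zpow_pos hxpos _
      rw [hgeo] at htail
      have hb := (abs_le.mp htail).1
      have haxj : x ^ (-(j : ℤ)) ≤ (a (j + 1) : ℝ) * x ^ (-(j : ℤ)) :=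
        le_mul_of_one_le_left hxj.le ha1
      rw [hsplit, mul_add, ← mul_assoc, ← mul_assoc, hsjsq, one_mul]
      nlinarith [hb, haxj, hxn]
end

section
/- Under the hypotheses (H1) and (H3) on the sequence (s(j), a(j)), there exists β ∈ (It(1), It(1)+1) such that β = s(1)a(1) + s(2)a(2)/β + s(3)a(3)/β² + … + s(n)a(n)/β^{n−1}. -/
open Finset

/-- Auxiliary partial sum `Q_j(x) = Σ_{i=j+1}^{n} s(i) a(i) x^{j+1-i}`. -/
noncomputable def Qaux (n : ℕ) (s : ℕ → ℤ) (a : ℕ → ℕ) (j : ℕ) (x : ℝ) : ℝ :=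
  ∑ i ∈ Finset.Icc (j + 1) n, (s i : ℝ) * (a i : ℝ) * x ^ ((j : ℤ) + 1 - i)

lemma Qaux_rec (n : ℕ) (s : ℕ → ℤ) (a : ℕ → ℕ) (j : ℕ) (x : ℝ)
    (hjn : j + 1 ≤ n) (hx : x ≠ 0) :
    Qaux n s a j x = (s (j + 1) : ℝ) * (a (j + 1) : ℝ) + Qaux n s a (j + 1) x / x := by
  unfold Qaux
  rw [show Finset.Icc (j + 1) n = insert (j + 1) (Finset.Icc (j + 2) n) by
      ext i; simp only [Finset.mem_Icc, Finset.mem_insert]; omega,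
    Finset.sum_insert (by simp)]
  congr 1
  · rw [show ((j : ℤ) + 1 - ((j + 1 : ℕ) : ℤ)) = 0 by push_cast; ring, zpow_zero, mul_one]
  · rw [Finset.sum_div]
    refine Finset.sum_congr rfl fun i hi => ?_
    rw [mul_div_assoc]
    congr 1
    rw [eq_div_iff hx, ← zpow_add_one₀ hx]
    congr 1
    push_cast; ring

lemma Qaux_key (n : ℕ) (hn : 2 ≤ n) (s : ℕ → ℤ) (a : ℕ → ℕ)
    (hs : ∀ j : ℕ, 1 ≤ j → j ≤ n → s j = 1 ∨ s j = -1) (han : a n ≠ 0)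
    (H1 : ∀ j : ℕ, 2 ≤ j → j ≤ n → a j < ItSeq n s a 1)
    (H3 : ∀ j : ℕ, 1 ≤ j → j ≤ n - 1 → a j = 0 → s (j + 1) = s j)
    (x : ℝ) (hx : (ItSeq n s a 1 : ℝ) ≤ x) :
    ∀ d j : ℕ, 1 ≤ j → j + 1 + d = n →
      0 < (s (j + 1) : ℝ) * Qaux n s a j x ∧ (s (j + 1) : ℝ) * Qaux n s a j x < x := by
  have hM2 : 2 ≤ ItSeq n s a 1 := by
    have h1 := H1 n (by omega) le_rfl; omega
  have hx2 : (2 : ℝ) ≤ x := by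
    have h2 : ((2 : ℕ) : ℝ) ≤ (ItSeq n s a 1 : ℝ) := by exact_mod_cast hM2
    push_cast at h2; linarith
  have hx0 : (0 : ℝ) < x := by linarith
  have hxne : x ≠ 0 := ne_of_gt hx0
  have hub : ∀ i : ℕ, 2 ≤ i → i ≤ n → (a i : ℝ) ≤ x - 1 := by
    intro i h2 hin
    have h3 : (a i : ℕ) + 1 ≤ ItSeq n s a 1 := H1 i h2 hin
    have h4 : ((a i : ℝ) + 1) ≤ (ItSeq n s a 1 : ℝ) := by exact_mod_cast h3
    linarith
  intro d
  induction d with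
  | zero =>
    intro j hj hjn
    have hjn' : j + 1 = n := by omega
    have hQ : Qaux n s a j x = (s n : ℝ) * (a n : ℝ) := by
      unfold Qaux
      rw [hjn', Finset.Icc_self, Finset.sum_singleton,
        show ((j : ℤ) + 1 - (n : ℤ)) = 0 by omega, zpow_zero, mul_one]
    have han' : (1 : ℝ) ≤ (a n : ℝ) := by
      exact_mod_cast Nat.one_le_iff_ne_zero.mpr han
    have hub' := hub n hn le_rfl
    rcases hs n (by omega) le_rfl with h | h <;>
      rw [hQ, hjn', h] <;> push_cast <;> constructor <;> nlinarith
  | succ d ih =>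
    intro j hj hjn
    obtain ⟨h0, h1⟩ := ih (j + 1) (by omega) (by omega)
    rw [Qaux_rec n s a j x (by omega) hxne]
    set q := Qaux n s a (j + 1) x with hqdef
    have hub' := hub (j + 1) (by omega) (by omega)
    have hflip : s (j + 1 + 1) ≠ s (j + 1) → (1 : ℝ) ≤ (a (j + 1) : ℝ) := by
      intro hne
      have hz : a (j + 1) ≠ 0 := fun h0' => hne (H3 (j + 1) (by omega) (by omega) h0')
      exact_mod_cast Nat.one_le_iff_ne_zero.mpr hz
    have ha0 : (0 : ℝ) ≤ (a (j + 1) : ℝ) := Nat.cast_nonneg _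
    rcases hs (j + 1) (by omega) (by omega) with e1 | e1 <;>
      rcases hs (j + 1 + 1) (by omega) (by omega) with e2 | e2
    · -- q ∈ (0, x)
      rw [e2] at h0 h1; push_cast at h0 h1
      have hd0 : 0 < q / x := div_pos (by linarith) hx0
      have hd1 : q / x < 1 := (div_lt_one hx0).mpr (by linarith)
      rw [e1]; push_cast
      constructor <;> linarith
    · -- q ∈ (-x, 0), flip: a ≥ 1
      have hge := hflip (by rw [e1, e2]; decide)
      rw [e2] at h0 h1; push_cast at h0 h1
      have hd0 : q / x < 0 := div_neg_of_neg_of_pos (by linarith) hx0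
      have hd1 : -1 < q / x := by rw [lt_div_iff₀ hx0]; linarith
      rw [e1]; push_cast
      constructor <;> linarith
    · -- e1 = -1, e2 = 1 : q ∈ (0,x), flip
      have hge := hflip (by rw [e1, e2]; decide)
      rw [e2] at h0 h1; push_cast at h0 h1
      have hd0 : 0 < q / x := div_pos (by linarith) hx0
      have hd1 : q / x < 1 := (div_lt_one hx0).mpr (by linarith)
      rw [e1]; push_cast
      constructor <;> linarith
    · -- e1 = e2 = -1 : q ∈ (-x, 0)
      rw [e2] at h0 h1; push_cast at h0 h1
      have hd0 : q / x < 0 := div_neg_of_neg_of_pos (by linarith) hx0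
      have hd1 : -1 < q / x := by rw [lt_div_iff₀ hx0]; linarith
      rw [e1]; push_cast
      constructor <;> linarith

/-- Under hypotheses (H1) and (H3), there exists `β ∈ (It(1), It(1)+1)` with
`β = s(1)a(1) + s(2)a(2)/β + … + s(n)a(n)/β^{n−1}`. -/
theorem stmt11 (n : ℕ) (hn : 2 ≤ n) (s : ℕ → ℤ) (a : ℕ → ℕ)
    (hs1 : s 1 = 1) (hs : ∀ j : ℕ, 1 ≤ j → j ≤ n → s j = 1 ∨ s j = -1) (han : a n ≠ 0)
    (H1 : ∀ j : ℕ, 2 ≤ j → j ≤ n → a j < ItSeq n s a 1)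
    (H3 : ∀ j : ℕ, 1 ≤ j → j ≤ n - 1 → a j = 0 → s (j + 1) = s j) :
    ∃ β : ℝ, β ∈ Set.Ioo (ItSeq n s a 1 : ℝ) ((ItSeq n s a 1 : ℝ) + 1) ∧
      β = ∑ j ∈ Finset.Icc 1 n, (s j : ℝ) * (a j : ℝ) * β ^ (1 - (j : ℤ)) := by
  have h1n : (1 : ℕ) ≠ n := by omega
  have hM2 : 2 ≤ ItSeq n s a 1 := by have h1 := H1 n (by omega) le_rfl; omega
  set M := ItSeq n s a 1 with hMdef
  have hMr : (2 : ℝ) ≤ (M : ℝ) := by exact_mod_cast hM2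
  have hM0 : (0 : ℝ) < (M : ℝ) := by linarith
  have key := Qaux_key n hn s a hs han H1 H3
  set f : ℝ → ℝ := fun x => x - ((a 1 : ℝ) + Qaux n s a 1 x / x) with hf
  have hne : ∀ x ∈ Set.Icc (M : ℝ) ((M : ℝ) + 1), x ≠ 0 := by
    intro x hx h0
    have h1 := hx.1; rw [h0] at h1; linarith
  have hcont : ContinuousOn f (Set.Icc (M : ℝ) ((M : ℝ) + 1)) := by
    apply ContinuousOn.sub continuousOn_id
    apply ContinuousOn.add continuousOn_const
    apply ContinuousOn.div ?_ continuousOn_id hne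
    unfold Qaux
    apply continuousOn_finset_sum
    intro i _
    exact continuousOn_const.mul fun x hx =>
      (continuousAt_zpow₀ x _ (Or.inl (hne x hx))).continuousWithinAt
  obtain ⟨hA0, hA1⟩ := key (M : ℝ) le_rfl (n - 2) 1 le_rfl (by omega)
  obtain ⟨hB0, hB1⟩ := key ((M : ℝ) + 1) (by linarith) (n - 2) 1 le_rfl (by omega)
  have hs2 := hs 2 (by omega) hn
  have hMit : M = if s 2 = s 1 then a 1 else a 1 - 1 := by
    rw [hMdef]; simp [ItSeq, h1n]
  have hfM : f (M : ℝ) < 0 ∧ 0 < f ((M : ℝ) + 1) := by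
    rcases hs2 with h2 | h2
    · have ha1 : (a 1 : ℝ) = (M : ℝ) := by
        have : M = a 1 := by rw [hMit, if_pos (by rw [h2, hs1])]
        rw [this]
      rw [show ((1:ℕ)+1) = 2 from rfl, h2] at hA0 hA1 hB0 hB1
      push_cast at hA0 hA1 hB0 hB1
      constructor
      · simp only [hf]
        have hd : 0 < Qaux n s a 1 (M : ℝ) / (M : ℝ) := div_pos (by linarith) hM0
        linarith
      · simp only [hf]
        have hd : Qaux n s a 1 ((M : ℝ) + 1) / ((M : ℝ) + 1) < 1 :=
          (div_lt_one (by linarith)).mpr (by linarith)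
        linarith
    · have ha1 : (a 1 : ℝ) = (M : ℝ) + 1 := by
        have hne1 : ¬ (s 2 = s 1) := by rw [h2, hs1]; decide
        have ha1p : a 1 ≠ 0 := by
          intro h0
          exact hne1 (by simpa using H3 1 le_rfl (by omega) h0)
        have : M = a 1 - 1 := by rw [hMit, if_neg hne1]
        have : M + 1 = a 1 := by omega
        exact_mod_cast congrArg (Nat.cast : ℕ → ℝ) this.symm
      rw [show ((1:ℕ)+1) = 2 from rfl, h2] at hA0 hA1 hB0 hB1
      push_cast at hA0 hA1 hB0 hB1
      constructor
      · simp only [hf]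
        have hd : -1 < Qaux n s a 1 (M : ℝ) / (M : ℝ) := by
          rw [lt_div_iff₀ hM0]; linarith
        linarith
      · simp only [hf]
        have hd : Qaux n s a 1 ((M : ℝ) + 1) / ((M : ℝ) + 1) < 0 :=
          div_neg_of_neg_of_pos (by linarith) (by linarith)
        linarith
  obtain ⟨β, hβmem, hβeq⟩ :=
    intermediate_value_Ioo (by linarith : (M : ℝ) ≤ (M : ℝ) + 1) hcont
      (Set.mem_Ioo.mpr ⟨hfM.1, hfM.2⟩)
  refine ⟨β, hβmem, ?_⟩
  have hβ0 : β ≠ 0 := by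
    intro h0
    have h1 := hβmem.1; rw [h0] at h1; linarith
  have hfix : β = (s 1 : ℝ) * (a 1 : ℝ) + Qaux n s a 1 β / β := by
    have h1 : f β = 0 := hβeq
    simp only [hf] at h1
    rw [hs1]; push_cast; linarith
  have hsum : (∑ j ∈ Finset.Icc 1 n, (s j : ℝ) * (a j : ℝ) * β ^ (1 - (j : ℤ)))
      = Qaux n s a 0 β := by
    unfold Qaux
    refine Finset.sum_congr (by norm_num) fun i _ => ?_
    norm_num
  rw [hsum, Qaux_rec n s a 0 β (by omega) hβ0]
  exact hfix
end

section
/- Assume hypotheses (H1), (H2) and (H3) on the sequence (s(j), a(j)), let β ∈ (It(1), It(1)+1) satisfy β = Σ_{j=1}^n s(j)a(j)β^{1−j}, and let f = f_{β,E} with E as in (H2). Then for every k ∈ {1, …, n−1}: (i) f^{k−1}(1) ∈ I_{It(k)}, and (ii) f^{k−1}(1) = (1/β)·(a(k) + β^{k−1}·E(It(k))·|R_k(β)|). -/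
open Finset

noncomputable def tAux (n : ℕ) (s : ℕ → ℤ) (a : ℕ → ℕ) (β : ℝ) (k : ℕ) : ℝ :=
  (s (k+1) : ℝ) * β ^ ((k:ℤ) - 1) * RSum n s a k β

/-- Under (H1), (H2), (H3), with `β ∈ (It(1), It(1)+1)` satisfying
`β = Σ_{j=1}^n s(j)a(j)β^{1−j}` and `f = f_{β,E}`, for every `1 ≤ k ≤ n−1`:
(i) `f^{k−1}(1) ∈ I_{It(k)}`, and
(ii) `f^{k−1}(1) = (1/β)·(a(k) + β^{k−1}·E(It(k))·|R_k(β)|)`. -/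
theorem stmt12 (n : ℕ) (hn : 2 ≤ n) (s : ℕ → ℤ) (a : ℕ → ℕ)
    (hs1 : s 1 = 1) (hs : ∀ j : ℕ, 1 ≤ j → j ≤ n → s j = 1 ∨ s j = -1) (han : a n ≠ 0)
    (H1 : ∀ j : ℕ, 2 ≤ j → j ≤ n → a j < ItSeq n s a 1)
    (H3 : ∀ j : ℕ, 1 ≤ j → j ≤ n - 1 → a j = 0 → s (j + 1) = s j)
    (E : ℕ → ℤ) (hE : ∀ k ≤ ItSeq n s a 1, E k = 1 ∨ E k = -1)
    (H2 : ∀ j : ℕ, 1 ≤ j → j ≤ n - 1 → s (j + 1) = s j * E (ItSeq n s a j))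
    (β : ℝ) (hβ : β ∈ Set.Ioo (ItSeq n s a 1 : ℝ) ((ItSeq n s a 1 : ℝ) + 1))
    (hfix : β = ∑ j ∈ Finset.Icc 1 n, (s j : ℝ) * (a j : ℝ) * β ^ (1 - (j : ℤ))) :
    ∀ k : ℕ, 1 ≤ k → k ≤ n - 1 →
      memI β (ItSeq n s a 1) (ItSeq n s a k) ((gbeta β E)^[k - 1] 1) ∧
      (gbeta β E)^[k - 1] 1
        = (1 / β) * ((a k : ℝ) + β ^ (k - 1) * (E (ItSeq n s a k) : ℝ) * |RSum n s a k β|) := by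

  have hβ0 : (0:ℝ) < β := by
    have := hβ.1
    have h0 : (0:ℝ) ≤ (ItSeq n s a 1 : ℝ) := Nat.cast_nonneg _
    linarith
  have hβne : β ≠ 0 := ne_of_gt hβ0
  set m := ItSeq n s a 1 with hmdef
  have hm1 : 1 ≤ m := by
    have := H1 n (by omega) (by omega)
    omega
  have hβm : (m:ℝ) < β := hβ.1
  have hβm1 : β < (m:ℝ) + 1 := hβ.2
  have hβ1 : (1:ℝ) < β := by
    have : (1:ℝ) ≤ (m:ℝ) := by exact_mod_cast hm1
    linarith
  have hss : ∀ j : ℕ, 1 ≤ j → j ≤ n → (s j : ℝ) * (s j : ℝ) = 1 := by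
    intro j h1 h2
    rcases hs j h1 h2 with h | h <;> rw [h] <;> norm_num
  -- R recurrence
  have hRrec : ∀ k, k < n →
      RSum n s a k β = (s (k+1):ℝ) * (a (k+1):ℝ) * β ^ (-(k:ℤ)) + RSum n s a (k+1) β := by
    intro k hk
    unfold RSum
    exact Finset.sum_eq_sum_Ico_succ_bot hk _
  -- t recurrence
  have htrec : ∀ k, 1 ≤ k → k ≤ n - 2 →
      β * tAux n s a β k
        = (a (k+1) : ℝ) + ((s (k+1) : ℝ) * (s (k+2) : ℝ)) * tAux n s a β (k+1) := by
    intro k hk1 hk2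
    have hA := hss (k+1) (by omega) (by omega)
    have hB := hss (k+2) (by omega) (by omega)
    unfold tAux
    rw [hRrec k (by omega)]
    have h2 : β ^ (((k+1:ℕ):ℤ) - 1) = β * β ^ ((k:ℤ)-1) := by
      push_cast
      rw [← zpow_one_add₀ hβne]
      ring_nf
    have hPQ : β * β ^ ((k:ℤ)-1) * β ^ (-(k:ℤ)) = 1 := by
      rw [← zpow_one_add₀ hβne, ← zpow_add₀ hβne]
      norm_num
    rw [h2]
    linear_combination ((a (k+1):ℝ) * (s (k+1):ℝ) * (s (k+1):ℝ)) * hPQ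
      + (a (k+1):ℝ) * hA
      - ((s (k+1):ℝ) * β * β ^ ((k:ℤ)-1) * RSum n s a (k+1) β) * hB
  -- t last value
  have htlast : tAux n s a β (n-1) = (a n : ℝ) / β := by
    have hR : RSum n s a (n-1) β = (s n : ℝ) * (a n : ℝ) * β ^ (-((n-1:ℕ):ℤ)) := by
      unfold RSum
      rw [show Finset.Ico (n-1) n = {n-1} by ext x; simp; omega]
      rw [Finset.sum_singleton, show n - 1 + 1 = n by omega]
    unfold tAux
    rw [hR, show n - 1 + 1 = n by omega]
    have hsn := hss n (by omega) (by omega)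
    have hzp : β ^ (((n-1:ℕ):ℤ) - 1) * β ^ (-((n-1:ℕ):ℤ)) = β⁻¹ := by
      rw [← zpow_add₀ hβne]
      rw [show ((n-1:ℕ):ℤ) - 1 + -((n-1:ℕ):ℤ) = -1 by ring]
      simp
    rw [div_eq_mul_inv]
    linear_combination ((a n:ℝ) * β ^ (((n-1:ℕ):ℤ) - 1) * β ^ (-((n-1:ℕ):ℤ))) * hsn
      + (a n:ℝ) * hzp
  -- sign of eps with zero-digit case
  have hεcase : ∀ k, 1 ≤ k → k ≤ n - 2 →
      ((s (k+1) : ℝ) * (s (k+2) : ℝ) = 1 ∨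
       ((s (k+1) : ℝ) * (s (k+2) : ℝ) = -1 ∧ 1 ≤ a (k+1))) := by
    intro k hk1 hk2
    rcases Nat.eq_zero_or_pos (a (k+1)) with h0 | h1
    · left
      rw [H3 (k+1) (by omega) (by omega) h0]
      exact hss (k+1) (by omega) (by omega)
    · rcases hs (k+1) (by omega) (by omega) with h | h <;>
        rcases hs (k+2) (by omega) (by omega) with h' | h' <;>
        rw [h, h'] <;> norm_num
      · exact h1
      · exact h1
  -- bounds on t
  have htboundAux : ∀ d k, 1 ≤ k → k ≤ n - 1 → n - 1 - k = d →
      0 < tAux n s a β k ∧ tAux n s a β k < 1 := by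
    intro d
    induction d with
    | zero =>
      intro k hk1 hk2 hd
      have hke : k = n - 1 := by omega
      subst hke
      rw [htlast]
      have h1 : (0:ℝ) < (a n : ℝ) := by
        have : 1 ≤ a n := Nat.one_le_iff_ne_zero.2 han
        exact_mod_cast Nat.lt_of_lt_of_le Nat.zero_lt_one this
      have h2 : (a n : ℝ) < β := by
        have : (a n : ℝ) < (m : ℝ) := by exact_mod_cast H1 n (by omega) (by omega)
        linarith
      constructor
      · positivity
      · rw [div_lt_one hβ0]; exact h2
    | succ d ih =>
      intro k hk1 hk2 hd
      have hk2' : k ≤ n - 2 := by omega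
      obtain ⟨ht1, ht2⟩ := ih (k+1) (by omega) (by omega) (by omega)
      have hrec := htrec k hk1 hk2'
      have haub : (a (k+1) : ℝ) + 1 ≤ (m : ℝ) := by
        exact_mod_cast H1 (k+1) (by omega) (by omega)
      have hT : tAux n s a β k
          = ((a (k+1) : ℝ) + ((s (k+1) : ℝ) * (s (k+2) : ℝ)) * tAux n s a β (k+1)) / β := by
        rw [eq_div_iff hβne]; linarith [hrec]
      rw [hT]
      have ha0 : (0:ℝ) ≤ (a (k+1) : ℝ) := Nat.cast_nonneg _
      rcases hεcase k hk1 hk2' with hε | ⟨hε, ha1⟩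
      · rw [hε]
        constructor
        · apply div_pos (by linarith) hβ0
        · rw [div_lt_one hβ0]; linarith
      · rw [hε]
        have ha1' : (1:ℝ) ≤ (a (k+1) : ℝ) := by exact_mod_cast ha1
        constructor
        · apply div_pos (by nlinarith) hβ0
        · rw [div_lt_one hβ0]; nlinarith
  have htbound : ∀ k, 1 ≤ k → k ≤ n - 1 → 0 < tAux n s a β k ∧ tAux n s a β k < 1 :=
    fun k hk1 hk2 => htboundAux (n-1-k) k hk1 hk2 rfl
  -- branch / step lemma
  have hbr : ∀ k, 1 ≤ k → k ≤ n - 1 → ∀ x : ℝ,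
      β * x = (a k : ℝ) + (s k : ℝ) * (s (k+1) : ℝ) * tAux n s a β k →
      branchIdx β x = ItSeq n s a k ∧ gbeta β E x = tAux n s a β k ∧
      ((ItSeq n s a k : ℝ) < β * x ∧ β * x < (ItSeq n s a k : ℝ) + 1) := by
    intro k hk1 hk2 x hx
    have hkn : k ≠ n := by omega
    obtain ⟨ht1, ht2⟩ := htbound k hk1 hk2
    have hIt : ItSeq n s a k = if s (k + 1) = s k then a k else a k - 1 := by
      simp [ItSeq, hkn]
    have hEIt : E (ItSeq n s a k) = s k * s (k+1) := by
      have h2 := H2 k hk1 hk2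
      rcases hs k (by omega) (by omega) with h | h <;> rw [h] at h2 ⊢ <;> omega
    by_cases hc : s (k+1) = s k
    · have hε : (s k : ℝ) * (s (k+1) : ℝ) = 1 := by
        rw [hc]; exact hss k (by omega) (by omega)
      rw [hε, one_mul] at hx
      have hIt' : ItSeq n s a k = a k := by rw [hIt, if_pos hc]
      have hceil : ⌈β * x⌉ = (a k : ℤ) + 1 := by
        rw [Int.ceil_eq_iff]
        constructor <;> push_cast <;> linarith
      have hbx : branchIdx β x = a k := by
        simp only [branchIdx, hceil]; omega
      have hE1 : E (ItSeq n s a k) = 1 := by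
        rw [hEIt, hc]
        rcases hs k (by omega) (by omega) with h | h <;> rw [h] <;> norm_num
      rw [hIt'] at hE1
      refine ⟨by rw [hbx, hIt'], ?_, ?_⟩
      · unfold gbeta
        rw [hbx, if_pos hE1]
        rw [hx]; push_cast; ring
      · rw [hIt']; constructor <;> linarith
    · have ha1 : 1 ≤ a k := by
        by_contra h
        exact hc (H3 k hk1 hk2 (by omega))
      have hsneg : s (k+1) = - s k := by
        rcases hs k (by omega) (by omega) with h | h <;>
          rcases hs (k+1) (by omega) (by omega) with h' | h' <;> omega
      have hε : (s k : ℝ) * (s (k+1) : ℝ) = -1 := by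
        rcases hs k (by omega) (by omega) with h | h <;> rw [h] at hsneg ⊢ <;>
          rw [hsneg] <;> norm_num
      rw [hε] at hx
      have hIt' : ItSeq n s a k = a k - 1 := by rw [hIt, if_neg hc]
      have ha1' : (1:ℝ) ≤ (a k : ℝ) := by exact_mod_cast ha1
      have hceil : ⌈β * x⌉ = (a k : ℤ) := by
        rw [Int.ceil_eq_iff]
        constructor <;> push_cast <;> linarith
      have hbx : branchIdx β x = a k - 1 := by
        simp only [branchIdx, hceil]
        omega
      have hEneg : E (ItSeq n s a k) = -1 := by
        rw [hEIt, hsneg]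
        rcases hs k (by omega) (by omega) with h | h <;> rw [h] <;> norm_num
      rw [hIt'] at hEneg
      have hcast : ((a k - 1 : ℕ) : ℝ) = (a k : ℝ) - 1 := by
        push_cast [ha1]; ring
      refine ⟨by rw [hbx, hIt'], ?_, ?_⟩
      · unfold gbeta
        rw [hbx, if_neg (by omega), hcast]
        rw [hx]; push_cast; ring
      · rw [hIt', hcast]; constructor <;> linarith
  -- base identity: beta = a 1 + t1 contribution
  have hR1 : RSum n s a 1 β = β - (a 1 : ℝ) := by
    have hsplit : ∑ j ∈ Finset.Icc 1 n, (s j : ℝ) * (a j : ℝ) * β ^ (1 - (j : ℤ))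
        = (a 1 : ℝ) + RSum n s a 1 β := by
      rw [show Finset.Icc 1 n = insert 1 (Finset.Icc 2 n) by ext x; simp; omega]
      rw [Finset.sum_insert (by simp)]
      congr 1
      · simp [hs1]
      · unfold RSum
        refine Finset.sum_nbij' (fun j => j - 1) (fun i => i + 1) ?_ ?_ ?_ ?_ ?_
        · intro x hx; simp at hx ⊢; omega
        · intro x hx; simp at hx ⊢; omega
        · intro x hx; simp at hx ⊢; omega
        · intro x hx; simp
        · intro x hx
          simp only [Finset.mem_Icc] at hx
          rw [show x - 1 + 1 = x by omega]
          congr 1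
          have h : ((x-1:ℕ):ℤ) = (x:ℤ) - 1 := by omega
          rw [h]; ring_nf
    have := hfix
    rw [hsplit] at this
    linarith
  -- main forward invariant
  have hmain : ∀ k, 1 ≤ k → k ≤ n - 1 →
      β * ((gbeta β E)^[k-1] 1) = (a k : ℝ) + (s k : ℝ) * (s (k+1) : ℝ) * tAux n s a β k := by
    intro k
    induction k with
    | zero => omega
    | succ k ih =>
      intro _ hk2
      rcases Nat.eq_zero_or_pos k with hk0 | hk1
      · subst hk0
        have h0 : (gbeta β E)^[0+1-1] (1:ℝ) = 1 := rfl
        have ht1' : tAux n s a β 1 = (s 2 : ℝ) * (β - (a 1 : ℝ)) := by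
          unfold tAux
          rw [hR1]
          norm_num
        have h2 := hss 2 (by omega) (by omega)
        rw [h0, mul_one]
        show β = (a 1 : ℝ) + (s 1 : ℝ) * (s 2 : ℝ) * tAux n s a β 1
        rw [ht1', hs1]
        push_cast
        linear_combination ((a 1:ℝ) - β) * h2
      · have hk2' : k ≤ n - 1 := by omega
        have inv := ih hk1 hk2'
        have hstep := (hbr k hk1 hk2' _ inv).2.1
        have hit : (gbeta β E)^[(k+1)-1] 1 = tAux n s a β k := by
          rw [show (k+1)-1 = (k-1)+1 by omega, Function.iterate_succ_apply', hstep]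
        rw [hit]
        exact htrec k hk1 (by omega)
  -- conclusion
  intro k hk1 hk2
  have inv := hmain k hk1 hk2
  obtain ⟨hbrk, _, hlo, hhi⟩ := hbr k hk1 hk2 _ inv
  obtain ⟨ht1, ht2⟩ := htbound k hk1 hk2
  have hEIt : E (ItSeq n s a k) = s k * s (k+1) := by
    have h2 := H2 k hk1 hk2
    rcases hs k (by omega) (by omega) with h | h <;> rw [h] at h2 ⊢ <;> omega
  set x := (gbeta β E)^[k-1] 1 with hxdef
  constructor
  · -- memI
    rcases Nat.eq_or_lt_of_le hk1 with hke | hkgt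
    · -- k = 1
      have hk1' : k = 1 := hke.symm
      subst hk1'
      have hx1 : x = 1 := by rw [hxdef]; simp
      rw [hx1, ← hmdef]
      unfold memI
      rw [if_neg (show ¬ (m = 0) by omega), if_pos rfl]
      rw [Set.mem_Ioc]
      constructor
      · rw [div_lt_one hβ0]; exact hβm
      · exact le_refl 1
    · -- k ≥ 2
      have hKm : ItSeq n s a k < m := by
        have h1 := H1 k (by omega) (by omega)
        have h2 : ItSeq n s a k ≤ a k := by
          simp only [ItSeq, if_neg (show k ≠ n by omega)]
          split <;> omega
        omega
      unfold memI
      split_ifs with h1 h2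
      · -- K = 0
        rw [h1] at hlo hhi
        push_cast at hlo hhi
        rw [Set.mem_Icc]
        have hx0 : 0 < x := by
          by_contra h
          push_neg at h
          have h' : β * x ≤ β * 0 := mul_le_mul_of_nonneg_left h (le_of_lt hβ0)
          rw [mul_zero] at h'
          linarith
        constructor
        · exact le_of_lt hx0
        · rw [le_div_iff₀ hβ0, mul_comm]
          linarith
      · omega
      · rw [Set.mem_Ioc, div_lt_iff₀ hβ0, le_div_iff₀ hβ0, mul_comm x β]
        exact ⟨hlo, le_of_lt hhi⟩
  · -- formula
    have hz : β ^ (k-1) = β ^ ((k:ℤ)-1) := by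
      rw [← zpow_natCast]
      congr 1
      omega
    have habs : β ^ (k-1) * |RSum n s a k β| = tAux n s a β k := by
      rw [hz]
      have h1 : |β ^ ((k:ℤ)-1) * RSum n s a k β| = β ^ ((k:ℤ)-1) * |RSum n s a k β| := by
        rw [abs_mul, abs_of_pos (zpow_pos hβ0 _)]
      have h2 : |tAux n s a β k| = |β ^ ((k:ℤ)-1) * RSum n s a k β| := by
        unfold tAux
        rw [abs_mul, abs_mul]
        have : |(s (k+1) : ℝ)| = 1 := by
          rcases hs (k+1) (by omega) (by omega) with h | h <;> rw [h] <;> norm_num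
        rw [this, one_mul, abs_mul]
      rw [← h1, ← h2, abs_of_pos ht1]
    have hE' : (E (ItSeq n s a k) : ℝ) = (s k : ℝ) * (s (k+1) : ℝ) := by
      rw [hEIt]; push_cast; ring
    rw [hE']
    have hgoal : β * x = (a k : ℝ) + β ^ (k-1) * ((s k : ℝ) * (s (k+1) : ℝ)) * |RSum n s a k β| := by
      linear_combination inv - ((s k : ℝ) * (s (k+1) : ℝ)) * habs
    rw [← hgoal]
    field_simp
end

section
/- Assume hypotheses (H1), (H2) and (H3) on the sequence (s(j), a(j)), let β ∈ (It(1), It(1)+1) satisfy β = Σ_{j=1}^n s(j)a(j)β^{1−j}, and let f = f_{β,E} with E as in (H2). Then f^{n−1}(1) = a(n)/β, the orbit {f^j(1) : j ≥ 0} is finite, and consequently β is a generalized Parry number. -/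
open Finset

/-- Auxiliary tail sum `R_j = Σ_{i=j+1}^n s(i) a(i) β^{j-i}`. -/
noncomputable def tailR (n : ℕ) (s : ℕ → ℤ) (a : ℕ → ℕ) (β : ℝ) (j : ℕ) : ℝ :=
  ∑ i ∈ Finset.Ico (j+1) (n+1), (s i : ℝ) * (a i : ℝ) * β ^ ((j:ℤ) - (i:ℤ))

/-- Auxiliary signed orbit candidate `c_j = s(j+1)·R_j`. -/
noncomputable def tailC (n : ℕ) (s : ℕ → ℤ) (a : ℕ → ℕ) (β : ℝ) (j : ℕ) : ℝ :=
  (s (j+1) : ℝ) * tailR n s a β j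

lemma tailR_rec (n : ℕ) (s : ℕ → ℤ) (a : ℕ → ℕ) {β : ℝ} (hβ : β ≠ 0)
    {j : ℕ} (hj : j + 1 ≤ n) :
    β * tailR n s a β j = (s (j+1) : ℝ) * (a (j+1) : ℝ) + tailR n s a β (j+1) := by
  have h1 : β * tailR n s a β j
      = ∑ i ∈ Finset.Ico (j+1) (n+1), (s i : ℝ) * (a i : ℝ) * β ^ (((j+1:ℕ):ℤ) - (i:ℤ)) := by
    rw [tailR, Finset.mul_sum]
    refine Finset.sum_congr rfl fun i _ => ?_
    rw [show (((j+1:ℕ):ℤ)) - (i:ℤ) = 1 + ((j:ℤ) - (i:ℤ)) by push_cast; ring,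
      zpow_add₀ hβ, zpow_one]
    ring
  rw [h1, Finset.sum_eq_sum_Ico_succ_bot (by omega : j+1 < n+1),
    show (((j+1:ℕ):ℤ)) - (((j+1:ℕ)):ℤ) = 0 by ring, zpow_zero, mul_one, tailR]

/-- Under (H1), (H2), (H3), with `β ∈ (It(1), It(1)+1)` satisfying
`β = Σ_{j=1}^n s(j)a(j)β^{1−j}` and `f = f_{β,E}`, one has `f^{n−1}(1) = a(n)/β`,
the orbit of `1` is finite, and `β` is a generalized Parry number. -/
theorem stmt13 (n : ℕ) (hn : 2 ≤ n) (s : ℕ → ℤ) (a : ℕ → ℕ)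
    (hs1 : s 1 = 1) (hs : ∀ j : ℕ, 1 ≤ j → j ≤ n → s j = 1 ∨ s j = -1) (han : a n ≠ 0)
    (H1 : ∀ j : ℕ, 2 ≤ j → j ≤ n → a j < ItSeq n s a 1)
    (H3 : ∀ j : ℕ, 1 ≤ j → j ≤ n - 1 → a j = 0 → s (j + 1) = s j)
    (E : ℕ → ℤ) (hE : ∀ k ≤ ItSeq n s a 1, E k = 1 ∨ E k = -1)
    (H2 : ∀ j : ℕ, 1 ≤ j → j ≤ n - 1 → s (j + 1) = s j * E (ItSeq n s a j))
    (β : ℝ) (hβ : β ∈ Set.Ioo (ItSeq n s a 1 : ℝ) ((ItSeq n s a 1 : ℝ) + 1))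
    (hfix : β = ∑ j ∈ Finset.Icc 1 n, (s j : ℝ) * (a j : ℝ) * β ^ (1 - (j : ℤ))) :
    (gbeta β E)^[n - 1] 1 = (a n : ℝ) / β ∧ IsPCF β E ∧ IsGenParry β := by
  set m := ItSeq n s a 1 with hmdef
  have han1 : 1 ≤ a n := Nat.one_le_iff_ne_zero.2 han
  have ham : a n < m := H1 n (by omega) le_rfl
  have hm2 : 2 ≤ m := by omega
  have hβm : (m:ℝ) < β := hβ.1
  have hβm1 : β < (m:ℝ) + 1 := hβ.2
  have hmR : (2:ℝ) ≤ (m:ℝ) := by exact_mod_cast hm2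
  have hβ1 : (1:ℝ) < β := by linarith
  have hβ0 : (0:ℝ) < β := by linarith
  have hβne : β ≠ 0 := ne_of_gt hβ0
  have hn1 : n - 1 + 1 = n := by omega
  -- squares of signs
  have hsq : ∀ j, 1 ≤ j → j ≤ n → (s j : ℝ) * (s j : ℝ) = 1 := by
    intro j h1 h2; rcases hs j h1 h2 with h | h <;> rw [h] <;> norm_num
  have hsne : ∀ j, 1 ≤ j → j ≤ n → s j ≠ 0 := by
    intro j h1 h2; rcases hs j h1 h2 with h | h <;> rw [h] <;> norm_num
  -- initial value
  have hA : β * tailR n s a β 0 = ∑ i ∈ Finset.Icc 1 n, (s i : ℝ) * (a i : ℝ) * β ^ (1 - (i:ℤ)) := by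
    rw [tailR, Finset.mul_sum, ← Finset.Ico_add_one_right_eq_Icc]
    refine Finset.sum_congr rfl fun i _ => ?_
    rw [show (1:ℤ) - (i:ℤ) = 1 + (((0:ℕ):ℤ) - (i:ℤ)) by push_cast; ring, zpow_add₀ hβne, zpow_one]
    ring
  have hR0 : tailR n s a β 0 = 1 := by
    apply mul_left_cancel₀ hβne
    rw [hA, mul_one, ← hfix]
  have hc0 : tailC n s a β 0 = 1 := by
    rw [tailC, hR0, mul_one]
    exact_mod_cast congrArg (Int.cast : ℤ → ℝ) hs1
  -- last value
  have hclast : tailC n s a β (n-1) = (a n : ℝ) / β := by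
    have hsn := hsq n (by omega) le_rfl
    rw [tailC, tailR, hn1,
      show Finset.Ico n (n+1) = {n} by rw [Finset.Ico_add_one_right_eq_Icc, Finset.Icc_self],
      Finset.sum_singleton, show ((n-1:ℕ):ℤ) - (n:ℤ) = -1 by omega, zpow_neg_one]
    rw [div_eq_mul_inv]
    linear_combination ((a n : ℝ) * β⁻¹) * hsn
  -- recurrence for c
  have hcrec : ∀ j, j + 2 ≤ n →
      β * tailC n s a β j
        = (a (j+1) : ℝ) + (s (j+1) : ℝ) * (s (j+2) : ℝ) * tailC n s a β (j+1) := by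
    intro j hj
    have h1 := tailR_rec n s a hβne (by omega : j + 1 ≤ n)
    have hs1' := hsq (j+1) (by omega) (by omega)
    have hs2' := hsq (j+2) (by omega) (by omega)
    simp only [tailC, show j+1+1 = j+2 from rfl]
    linear_combination (s (j+1):ℝ) * h1 + (a (j+1):ℝ) * hs1'
      - ((s (j+1):ℝ) * tailR n s a β (j+1)) * hs2'
  -- bounds
  have hβ1' : (0:ℝ) < β - 1 := by linarith
  have hm1 : (1:ℝ) ≤ (m:ℝ) - 1 := by linarith
  set D : ℝ := ((m:ℝ) - 1)/(β - 1) with hD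
  have hD1 : D < 1 := by rw [hD, div_lt_one hβ1']; linarith
  have hD0 : 0 < D := by apply div_pos <;> linarith
  have hDkey : (m:ℝ) - 1 + D = β * D := by
    rw [hD]; field_simp; ring
  have hpos : ∀ k j, 1 ≤ j → j ≤ n - 1 → n - 1 - j = k →
      0 < tailC n s a β j ∧ tailC n s a β j ≤ D := by
    intro k
    induction k with
    | zero =>
      intro j h1 h2 h3
      have hj : j = n - 1 := by omega
      subst hj
      rw [hclast]
      have han' : (a n:ℝ) ≤ (m:ℝ) - 1 := by
        have : (a n : ℝ) + 1 ≤ (m:ℝ) := by exact_mod_cast ham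
        linarith
      have han0 : (0:ℝ) < (a n:ℝ) := by exact_mod_cast han1
      constructor
      · exact div_pos han0 hβ0
      · rw [hD, div_le_div_iff₀ hβ0 hβ1']
        nlinarith
    | succ k ih =>
      intro j h1 h2 h3
      have hj2 : j + 2 ≤ n := by omega
      obtain ⟨hp, hb⟩ := ih (j+1) (by omega) (by omega) (by omega)
      have hrec := hcrec j hj2
      have haj : (a (j+1):ℝ) ≤ (m:ℝ) - 1 := by
        have : (a (j+1) : ℝ) + 1 ≤ (m:ℝ) := by exact_mod_cast H1 (j+1) (by omega) (by omega)
        linarith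
      have hε : (s (j+1):ℝ) * (s (j+2):ℝ) = 1 ∨ (s (j+1):ℝ) * (s (j+2):ℝ) = -1 := by
        rcases hs (j+1) (by omega) (by omega) with h|h <;>
          rcases hs (j+2) (by omega) (by omega) with h'|h' <;>
            rw [h, h'] <;> norm_num
      have hbD : tailC n s a β (j+1) < 1 := lt_of_le_of_lt hb hD1
      constructor
      · by_cases ha0 : a (j+1) = 0
        · have hss : s (j+2) = s (j+1) := H3 (j+1) (by omega) (by omega) ha0
          have hε1 : (s (j+1):ℝ) * (s (j+2):ℝ) = 1 := by
            rw [hss]; exact hsq (j+1) (by omega) (by omega)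
          rw [ha0, hε1] at hrec
          push_cast at hrec
          have h' : 0 < β * tailC n s a β j := by rw [hrec]; linarith
          rcases mul_pos_iff.mp h' with ⟨_, hgood⟩ | ⟨hbad, _⟩
          · exact hgood
          · linarith
        · have ha1 : (1:ℝ) ≤ (a (j+1):ℝ) := by
            have : 1 ≤ a (j+1) := Nat.one_le_iff_ne_zero.2 ha0
            exact_mod_cast this
          have h' : 0 < β * tailC n s a β j := by
            rcases hε with h|h <;> rw [h] at hrec <;> rw [hrec] <;> linarith [hp, hbD, ha1]
          rcases mul_pos_iff.mp h' with ⟨_, hgood⟩ | ⟨hbad, _⟩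
          · exact hgood
          · linarith
      · have h' : β * tailC n s a β j ≤ β * D := by
          rcases hε with h|h <;> rw [h] at hrec <;> rw [hrec, ← hDkey] <;> linarith [hp, hb, haj]
        exact le_of_mul_le_mul_left h' hβ0
  have hposC : ∀ j, 1 ≤ j → j ≤ n - 1 →
      0 < tailC n s a β j ∧ tailC n s a β j ≤ D :=
    fun j h1 h2 => hpos _ j h1 h2 rfl
  -- one step of the dynamics
  have hstep : ∀ j, j + 2 ≤ n → gbeta β E (tailC n s a β j) = tailC n s a β (j+1) := by
    intro j hj
    obtain ⟨hp, hb⟩ := hposC (j+1) (by omega) (by omega)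
    have hb1 : tailC n s a β (j+1) < 1 := lt_of_le_of_lt hb hD1
    have hrec := hcrec j hj
    have hs1v := hs (j+1) (by omega) (by omega)
    have hs2v := hs (j+2) (by omega) (by omega)
    have hsne1 : s (j+1) ≠ 0 := hsne (j+1) (by omega) (by omega)
    have h2 := H2 (j+1) (by omega) (by omega)
    by_cases hcase : s (j+1+1) = s (j+1)
    · -- same sign branch
      have hε1 : (s (j+1):ℝ) * (s (j+2):ℝ) = 1 := by
        rw [show s (j+2) = s (j+1) from hcase]
        exact hsq (j+1) (by omega) (by omega)
      have hβc : β * tailC n s a β j = (a (j+1):ℝ) + tailC n s a β (j+1) := by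
        rw [hrec, hε1]; ring
      have hceil : ⌈β * tailC n s a β j⌉ = (a (j+1) : ℤ) + 1 := by
        rw [Int.ceil_eq_iff, hβc]
        constructor <;> push_cast <;> linarith
      have hBI : branchIdx β (tailC n s a β j) = a (j+1) := by
        rw [branchIdx, hceil]; omega
      have hIt : ItSeq n s a (j+1) = a (j+1) := by
        rw [ItSeq, if_neg (by omega), if_pos hcase]
      rw [hIt] at h2
      have hEv : E (a (j+1)) = 1 := by
        apply mul_left_cancel₀ hsne1
        rw [mul_one, ← h2, hcase]
      rw [gbeta, hBI, hEv, if_pos rfl, hβc]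
      ring
    · -- opposite sign branch
      have hcase' : s (j+2) = - s (j+1) := by
        rcases hs1v with h|h <;> rcases hs2v with h'|h' <;>
          rw [h, h'] at hcase ⊢ <;> first | rfl | exact absurd rfl hcase | norm_num
      have hε1 : (s (j+1):ℝ) * (s (j+2):ℝ) = -1 := by
        have := hsq (j+1) (by omega) (by omega)
        rw [hcase']; push_cast; linarith [this]
      have hβc : β * tailC n s a β j = (a (j+1):ℝ) - tailC n s a β (j+1) := by
        rw [hrec, hε1]; ring
      have ha1 : 1 ≤ a (j+1) := by
        by_contra h
        have ha0 : a (j+1) = 0 := by omega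
        exact hcase (H3 (j+1) (by omega) (by omega) ha0)
      have hceil : ⌈β * tailC n s a β j⌉ = (a (j+1) : ℤ) := by
        rw [Int.ceil_eq_iff, hβc]
        have : (1:ℝ) ≤ (a (j+1):ℝ) := by exact_mod_cast ha1
        constructor <;> push_cast <;> linarith
      have hBI : branchIdx β (tailC n s a β j) = a (j+1) - 1 := by
        rw [branchIdx, hceil]; omega
      have hIt : ItSeq n s a (j+1) = a (j+1) - 1 := by
        rw [ItSeq, if_neg (by omega), if_neg hcase]
      rw [hIt] at h2
      have hEv : E (a (j+1) - 1) = -1 := by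
        apply mul_left_cancel₀ hsne1
        rw [← h2, hcase']; ring
      rw [gbeta, hBI, hEv, if_neg (by norm_num), hβc, Nat.cast_sub ha1]
      push_cast
      ring
  -- iterate formula
  have hiter : ∀ j, j ≤ n - 1 → (gbeta β E)^[j] 1 = tailC n s a β j := by
    intro j
    induction j with
    | zero => intro _; simpa using hc0.symm
    | succ j ih =>
      intro hj
      rw [Function.iterate_succ_apply', ih (by omega), hstep j (by omega)]
  have hgoal1 : (gbeta β E)^[n-1] 1 = (a n : ℝ) / β := by
    rw [hiter (n-1) le_rfl, hclast]
  -- f(a n / β) ∈ {1, 0}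
  have hfan : gbeta β E ((a n:ℝ)/β) = 1 ∨ gbeta β E ((a n:ℝ)/β) = 0 := by
    have hx : β * ((a n:ℝ)/β) = (a n:ℝ) := by field_simp
    have hceil : ⌈β * ((a n:ℝ)/β)⌉ = (a n:ℤ) := by
      rw [hx]; exact_mod_cast Int.ceil_natCast (a n)
    have hBI : branchIdx β ((a n:ℝ)/β) = a n - 1 := by
      rw [branchIdx, hceil]; omega
    rcases hE (a n - 1) (by omega) with h|h
    · left
      rw [gbeta, hBI, h, if_pos rfl, hx, Nat.cast_sub han1]
      push_cast; ring
    · right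
      rw [gbeta, hBI, h, if_neg (by norm_num), hx, Nat.cast_sub han1]
      push_cast; ring
  have hfn : (gbeta β E)^[n] 1 = 1 ∨ (gbeta β E)^[n] 1 = 0 := by
    have h : (gbeta β E)^[n] 1 = gbeta β E ((a n:ℝ)/β) := by
      conv_lhs => rw [show n = (n-1)+1 by omega]
      rw [Function.iterate_succ_apply', hgoal1]
    rw [h]; exact hfan
  -- f(0) ∈ {0, 1}
  have h0 : gbeta β E 0 = 0 ∨ gbeta β E 0 = 1 := by
    have hx : β * (0:ℝ) = 0 := by ring
    have hceil : ⌈β * (0:ℝ)⌉ = 0 := by rw [hx]; exact Int.ceil_zero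
    have hBI : branchIdx β 0 = 0 := by rw [branchIdx, hceil]; omega
    rcases hE 0 (by omega) with h|h
    · left; rw [gbeta, hBI, h, if_pos rfl, hx]; norm_num
    · right; rw [gbeta, hBI, h, if_neg (by norm_num), hx]; norm_num
  -- the orbit is eventually among the first n+1 points
  have horb : ∀ j, ∃ i, i ≤ n ∧ (gbeta β E)^[j] 1 = (gbeta β E)^[i] 1 := by
    intro j
    induction j with
    | zero => exact ⟨0, by omega, rfl⟩
    | succ j ih =>
      obtain ⟨i, hi, he⟩ := ih
      rw [Function.iterate_succ_apply', he]
      by_cases hin : i < n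
      · exact ⟨i+1, by omega, (Function.iterate_succ_apply' _ _ _).symm⟩
      · have hieq : i = n := by omega
        rw [hieq]
        rcases hfn with h|h
        · rw [h]
          exact ⟨1, by omega, by rw [Function.iterate_one]⟩
        · rw [h]
          rcases h0 with h'|h'
          · exact ⟨n, le_rfl, by rw [h', h]⟩
          · exact ⟨0, by omega, by rw [h', Function.iterate_zero_apply]⟩
  have hPCF : IsPCF β E := by
    apply Set.Finite.subset ((Set.finite_Iic n).image (fun i => (gbeta β E)^[i] 1))
    rintro x ⟨j, rfl⟩
    obtain ⟨i, hi, he⟩ := horb j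
    exact ⟨i, Set.mem_Iic.2 hi, he.symm⟩
  exact ⟨hgoal1, hPCF, ⟨by linarith, m, E, ⟨by omega, hβm, le_of_lt hβm1, hE⟩, hPCF⟩⟩
end
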